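/- arXiv:2411.08549 — 7 statements merged into one kernel-verified Lean document; each statement's English description precedes it below -/
import Mathlib

section
/- Let d ≥ 1 and s₁, …, s_d > 0. Define F : (0, ∞) → ℝ by F(D) = inf{ Σ_{i=1}^d max{ln(s_i/D_i), 0} : D₁, …, D_d > 0, Σ_i D_i = D }. Then F is a convex function of D on (0, ∞). -/
open Real Finset

/-- Convexity of the reverse water-filling value: the function
`F(D) = inf {Σ max{ln(s i / D i), 0} : D i > 0, Σ D i = D}` is convex on `(0, ∞)`. -/
theorem waterfilling_value_convexOn (d : ℕ) (hd : 1 ≤ d) (s : Fin d → ℝ)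
    (hs : ∀ i, 0 < s i) :
    ConvexOn ℝ (Set.Ioi (0 : ℝ)) (fun D =>
      sInf {r : ℝ | ∃ Di : Fin d → ℝ, (∀ i, 0 < Di i) ∧ (∑ i, Di i) = D ∧
        r = ∑ i, max (Real.log (s i / Di i)) 0}) := by
  set S : ℝ → Set ℝ := fun D => {r : ℝ | ∃ Di : Fin d → ℝ, (∀ i, 0 < Di i) ∧ (∑ i, Di i) = D ∧
      r = ∑ i, max (Real.log (s i / Di i)) 0} with hS
  have hdR : (0:ℝ) < (d:ℝ) := by exact_mod_cast hd
  have hne : ∀ D : ℝ, 0 < D → (S D).Nonempty := by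
    intro D hD
    refine ⟨∑ i, max (Real.log (s i / (D / d))) 0, fun _ => D / d, fun _ => by positivity, ?_, rfl⟩
    rw [Finset.sum_const, Finset.card_univ, Fintype.card_fin, nsmul_eq_mul]
    field_simp
  have hbdd : ∀ D : ℝ, BddBelow (S D) := by
    intro D
    refine ⟨0, fun r hr => ?_⟩
    obtain ⟨Di, _, _, rfl⟩ := hr
    exact Finset.sum_nonneg fun i _ => le_max_right _ _
  refine ⟨convex_Ioi 0, ?_⟩
  intro x hx y hy a b ha hb hab
  simp only [smul_eq_mul]
  rcases eq_or_lt_of_le ha with ha0 | ha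
  · simp [← ha0, (by linarith : b = 1)] at *
  rcases eq_or_lt_of_le hb with hb0 | hb
  · simp [← hb0, (by linarith : a = 1)] at *
  have hx' : (0:ℝ) < x := hx
  have hy' : (0:ℝ) < y := hy
  have hxy : 0 < a * x + b * y := by positivity
  -- key: for members rx ∈ S x, ry ∈ S y, sInf (S (a*x+b*y)) ≤ a*rx + b*ry
  have key : ∀ rx ∈ S x, ∀ ry ∈ S y, sInf (S (a * x + b * y)) ≤ a * rx + b * ry := by
    rintro rx ⟨Dx, hDx, hsx, rfl⟩ ry ⟨Dy, hDy, hsy, rfl⟩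
    have hmem : (∑ i, max (Real.log (s i / (a * Dx i + b * Dy i))) 0) ∈ S (a * x + b * y) := by
      refine ⟨fun i => a * Dx i + b * Dy i, fun i => by have := hDx i; have := hDy i; positivity,
        ?_, rfl⟩
      rw [Finset.sum_add_distrib, ← Finset.mul_sum, ← Finset.mul_sum, hsx, hsy]
    refine le_trans (csInf_le (hbdd _) hmem) ?_
    rw [Finset.mul_sum, Finset.mul_sum, ← Finset.sum_add_distrib]
    refine Finset.sum_le_sum fun i _ => ?_
    have hX := hDx i
    have hY := hDy i
    have hsi := hs i
    have hlog : a * Real.log (Dx i) + b * Real.log (Dy i) ≤ Real.log (a * Dx i + b * Dy i) := by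
      have := (strictConcaveOn_log_Ioi.concaveOn).2 (Set.mem_Ioi.mpr hX)
        (Set.mem_Ioi.mpr hY) ha.le hb.le hab
      simpa using this
    have hdiv : ∀ X : ℝ, 0 < X → Real.log (s i / X) = Real.log (s i) - Real.log X :=
      fun X hX0 => Real.log_div hsi.ne' hX0.ne'
    have hrhs0 : 0 ≤ a * max (Real.log (s i / Dx i)) 0 + b * max (Real.log (s i / Dy i)) 0 := by
      have h1 : (0:ℝ) ≤ max (Real.log (s i / Dx i)) 0 := le_max_right _ _
      have h2 : (0:ℝ) ≤ max (Real.log (s i / Dy i)) 0 := le_max_right _ _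
      positivity
    refine max_le ?_ hrhs0
    have h1 : Real.log (s i / Dx i) ≤ max (Real.log (s i / Dx i)) 0 := le_max_left _ _
    have h2 : Real.log (s i / Dy i) ≤ max (Real.log (s i / Dy i)) 0 := le_max_left _ _
    have hc : Real.log (s i / (a * Dx i + b * Dy i))
        ≤ a * Real.log (s i / Dx i) + b * Real.log (s i / Dy i) := by
      rw [hdiv _ (by positivity), hdiv _ hX, hdiv _ hY]
      have : Real.log (s i) = a * Real.log (s i) + b * Real.log (s i) := by
        rw [← add_mul, hab, one_mul]
      nlinarith [hlog]
    calc Real.log (s i / (a * Dx i + b * Dy i))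
        ≤ a * Real.log (s i / Dx i) + b * Real.log (s i / Dy i) := hc
      _ ≤ a * max (Real.log (s i / Dx i)) 0 + b * max (Real.log (s i / Dy i)) 0 := by
          gcongr
  -- now conclude via ε-argument
  have hnex := hne x hx'
  have hney := hne y hy'
  refine le_of_forall_pos_le_add fun ε hε => ?_
  obtain ⟨rx, hrx, hrx'⟩ := Real.lt_sInf_add_pos hnex (show 0 < ε / 2 by positivity)
  obtain ⟨ry, hry, hry'⟩ := Real.lt_sInf_add_pos hney (show 0 < ε / 2 by positivity)
  have := key rx hrx ry hry
  nlinarith [this, mul_lt_mul_of_pos_left hrx' ha, mul_lt_mul_of_pos_left hry' hb,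
    ha.le, hb.le]
end

section
/- Let d ≥ 1 and let μ be a probability measure on ℝ^d × ℝ^d, viewed as the joint law of (X, Y) with X = (X₁, …, X_d) and Y = (Y₁, …, Y_d). Assume the marginal law of X is a product measure, i.e., the components X₁, …, X_d are independent. Then KL(μ ‖ law(X) ⊗ law(Y)) ≥ Σ_{i=1}^d KL(law(X_i, Y_i) ‖ law(X_i) ⊗ law(Y_i)); that is, the mutual information I(X; Y) is at least the sum of the componentwise mutual informations I(X_i; Y_i). -/
open MeasureTheory Real
open scoped ENNReal

section helpers

/-- Coercion of a finite sum of reals to `EReal`. -/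
lemma ereal_coe_sum {ι : Type*} (s : Finset ι) (f : ι → ℝ) :
    ((∑ i ∈ s, f i : ℝ) : EReal) = ∑ i ∈ s, ((f i : ℝ) : EReal) := by
  induction s using Finset.cons_induction with
  | empty => simp
  | cons a s ha ih => rw [Finset.sum_cons, Finset.sum_cons, EReal.coe_add, ih]

lemma mul_max_neg_log_le_one {t : ℝ} (ht : 0 ≤ t) : t * max (-Real.log t) 0 ≤ 1 := by
  rcases le_or_gt 1 t with h1 | h1
  · have : -Real.log t ≤ 0 := neg_nonpos.mpr (Real.log_nonneg h1)
    rw [max_eq_right this]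
    simp
  · rcases eq_or_lt_of_le ht with rfl | ht0
    · simp
    · have hinv : Real.log t⁻¹ ≤ t⁻¹ - 1 := Real.log_le_sub_one_of_pos (by positivity)
      have hlog : -Real.log t ≤ t⁻¹ - 1 := by rwa [Real.log_inv] at hinv
      have hnn : (0:ℝ) ≤ t⁻¹ - 1 := by
        have : (1:ℝ) ≤ t⁻¹ := (one_le_inv_iff₀.mpr ⟨ht0, h1.le⟩)
        linarith
      have : max (-Real.log t) 0 ≤ t⁻¹ - 1 := max_le hlog hnn
      calc t * max (-Real.log t) 0 ≤ t * (t⁻¹ - 1) :=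
            mul_le_mul_of_nonneg_left this ht
        _ = 1 - t := by field_simp
        _ ≤ 1 := by linarith

/-- Tonelli for a finite product of measures on `ℝ`, for a product of functions of
single coordinates. -/
lemma lintegral_pi_prod {n : ℕ} (ν : Fin n → Measure ℝ) [∀ i, SigmaFinite (ν i)]
    (f : Fin n → ℝ → ℝ≥0∞) (hf : ∀ i, Measurable (f i)) :
    ∫⁻ x, ∏ i, f i (x i) ∂Measure.pi ν = ∏ i, ∫⁻ t, f i t ∂ν i := by
  induction n with
  | zero => simp
  | succ n ih =>
    have h := measurePreserving_piFinSuccAbove ν 0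
    have he := (MeasurableEquiv.piFinSuccAbove (fun _ : Fin (n+1) => ℝ) 0).measurableEmbedding
    set F : ℝ × (Fin n → ℝ) → ℝ≥0∞ :=
      fun y => f 0 y.1 * ∏ j : Fin n, f (Fin.succ j) (y.2 j) with hF
    have hg2 : Measurable fun b : Fin n → ℝ => ∏ j : Fin n, f (Fin.succ j) (b j) :=
      Finset.measurable_prod _ fun j _ => (hf (Fin.succ j)).comp (measurable_pi_apply j)
    have hFmeas : Measurable F := ((hf 0).comp measurable_fst).mul (hg2.comp measurable_snd)
    have ih' := ih (fun j => ν (Fin.succ j)) (fun j => f (Fin.succ j))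
      (fun j => hf (Fin.succ j))
    calc ∫⁻ x, ∏ i, f i (x i) ∂Measure.pi ν
        = ∫⁻ x, F (MeasurableEquiv.piFinSuccAbove (fun _ : Fin (n+1) => ℝ) 0 x)
            ∂Measure.pi ν := by
          refine lintegral_congr fun x => ?_
          rw [Fin.prod_univ_succ]
          rfl
      _ = ∫⁻ y, F y ∂((ν 0).prod (Measure.pi fun j => ν ((0 : Fin (n+1)).succAbove j))) :=
          h.lintegral_comp_emb he F
      _ = (∫⁻ t, f 0 t ∂ν 0) *
            ∫⁻ b : Fin n → ℝ, ∏ j : Fin n, f (Fin.succ j) (b j)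
              ∂(Measure.pi fun j => ν (Fin.succ j)) :=
          lintegral_prod_mul (hf 0).aemeasurable hg2.aemeasurable
      _ = (∫⁻ t, f 0 t ∂ν 0) * ∏ j : Fin n, ∫⁻ t, f (Fin.succ j) t ∂ν (Fin.succ j) := by
          rw [ih']
      _ = ∏ i, ∫⁻ t, f i t ∂ν i := (Fin.prod_univ_succ fun i => ∫⁻ t, f i t ∂ν i).symm

/-- The negative part of a log-likelihood ratio is integrable. -/
lemma integrable_max_neg_llr {α : Type*} [MeasurableSpace α] (μ ν : Measure α)
    [IsFiniteMeasure μ] [IsFiniteMeasure ν] (hμν : μ ≪ ν) :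
    Integrable (fun a => max (-llr μ ν a) 0) μ := by
  refine ⟨((measurable_llr μ ν).neg.max measurable_const).aestronglyMeasurable, ?_⟩
  rw [hasFiniteIntegral_iff_ofReal (f := fun a => max (-llr μ ν a) 0)
    (Filter.Eventually.of_forall fun a => le_max_right _ _)]
  set φ : α → ℝ≥0∞ := fun a => ENNReal.ofReal (max (-llr μ ν a) 0) with hφ
  have hφm : Measurable φ :=
    ENNReal.measurable_ofReal.comp ((measurable_llr μ ν).neg.max measurable_const)
  have hrw := lintegral_withDensity_eq_lintegral_mul ν (Measure.measurable_rnDeriv μ ν) hφm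
  rw [Measure.withDensity_rnDeriv_eq μ ν hμν] at hrw
  rw [hrw]
  have hbound : ∀ᵐ a ∂ν,
      (μ.rnDeriv ν * φ) a ≤ 1 := by
    filter_upwards [Measure.rnDeriv_lt_top μ ν] with a ha
    have ht : (0:ℝ) ≤ (μ.rnDeriv ν a).toReal := ENNReal.toReal_nonneg
    have h1 : μ.rnDeriv ν a = ENNReal.ofReal (μ.rnDeriv ν a).toReal := by
      rw [ENNReal.ofReal_toReal ha.ne]
    simp only [Pi.mul_apply, hφ]
    rw [h1, ← ENNReal.ofReal_mul ht]
    calc ENNReal.ofReal ((μ.rnDeriv ν a).toReal * max (-llr μ ν a) 0)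
        ≤ ENNReal.ofReal 1 := by
          refine ENNReal.ofReal_le_ofReal ?_
          exact mul_max_neg_log_le_one ht
      _ = 1 := ENNReal.ofReal_one
  calc ∫⁻ a, (μ.rnDeriv ν * φ) a ∂ν
      ≤ ∫⁻ _, 1 ∂ν := lintegral_mono_ae hbound
    _ = ν Set.univ := by simp
    _ < ⊤ := measure_lt_top ν _

/-- Mapping a product of probability measures by evaluation gives the factor. -/
lemma pi_map_eval {n : ℕ} (ν : Fin n → Measure ℝ) [∀ i, IsProbabilityMeasure (ν i)]
    (i : Fin n) : (Measure.pi ν).map (Function.eval i) = ν i := by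
  ext s hs
  rw [Measure.map_apply (measurable_pi_apply i) hs, Set.eval_preimage, Measure.pi_pi]
  rw [Finset.prod_eq_single_of_mem i (Finset.mem_univ i)]
  · simp
  · intro j _ hj
    rw [Function.update_of_ne hj]
    exact measure_univ

end helpers

open MeasureTheory Real

open Classical in
/-- The Kullback–Leibler divergence (in nats) of `μ` with respect to `ν`:
`∫ log(dμ/dν) dμ` when `μ ≪ ν` and the log-likelihood ratio is integrable,
and `+∞` otherwise. -/
noncomputable def klDiv {α : Type*} [MeasurableSpace α] (μ ν : Measure α) : EReal :=
  if μ ≪ ν ∧ Integrable (llr μ ν) μ then ((∫ x, llr μ ν x ∂μ : ℝ) : EReal)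
  else ⊤


section mainaux

open scoped ENNReal

/-- Projection of a pair of vectors onto the pair of `i`-th coordinates. -/
def projPair (d : ℕ) (i : Fin d) : (Fin d → ℝ) × (Fin d → ℝ) → ℝ × ℝ :=
  fun p => (p.1 i, p.2 i)

set_option maxHeartbeats 1000000 in
theorem aux_main (d : ℕ) (μ : Measure ((Fin d → ℝ) × (Fin d → ℝ))) [IsProbabilityMeasure μ]
    (ν : Fin d → Measure ℝ) (hν : ∀ i, IsProbabilityMeasure (ν i))
    (hfst : μ.fst = Measure.pi ν)
    (hac : μ ≪ μ.fst.prod μ.snd) (hint : Integrable (llr μ (μ.fst.prod μ.snd)) μ) :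
    (∀ i, μ.map (projPair d i)
        ≪ (μ.map (projPair d i)).fst.prod (μ.map (projPair d i)).snd) ∧
    (∀ i, Integrable (llr (μ.map (projPair d i))
        ((μ.map (projPair d i)).fst.prod (μ.map (projPair d i)).snd)) (μ.map (projPair d i))) ∧
      ∑ i, ∫ w, llr (μ.map (projPair d i))
          ((μ.map (projPair d i)).fst.prod (μ.map (projPair d i)).snd) w ∂(μ.map (projPair d i))
        ≤ ∫ z, llr μ (μ.fst.prod μ.snd) z ∂μ := by
  classical
  haveI : ∀ i, IsProbabilityMeasure (ν i) := hν
  have hπm : ∀ i, Measurable (projPair d i) := fun i =>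
    ((measurable_pi_apply i).comp measurable_fst).prodMk
      ((measurable_pi_apply i).comp measurable_snd)
  haveI hμiP : ∀ i, IsProbabilityMeasure (μ.map (projPair d i)) :=
    fun i => Measure.isProbabilityMeasure_map (hπm i).aemeasurable
  -- marginals of the projected measures
  have hfst_i : ∀ i, (μ.map (projPair d i)).fst = μ.fst.map (Function.eval i) := by
    intro i
    show (μ.map (projPair d i)).map Prod.fst = (μ.map Prod.fst).map (Function.eval i)
    rw [Measure.map_map measurable_fst (hπm i),
        Measure.map_map (measurable_pi_apply i) measurable_fst]
    rfl
  have hsnd_i : ∀ i, (μ.map (projPair d i)).snd = μ.snd.map (Function.eval i) := by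
    intro i
    show (μ.map (projPair d i)).map Prod.snd = (μ.map Prod.snd).map (Function.eval i)
    rw [Measure.map_map measurable_snd (hπm i),
        Measure.map_map (measurable_pi_apply i) measurable_snd]
    rfl
  have hprojPair : ∀ i, projPair d i
      = Prod.map (Function.eval i) (Function.eval i) := fun i => rfl
  have hmapP : ∀ i, (μ.fst.prod μ.snd).map (projPair d i)
      = (μ.map (projPair d i)).fst.prod (μ.map (projPair d i)).snd := by
    intro i
    rw [hfst_i, hsnd_i, hprojPair,
      Measure.map_prod_map _ _ (measurable_pi_apply i) (measurable_pi_apply i)]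
  have habs : ∀ i, μ.map (projPair d i)
      ≪ (μ.map (projPair d i)).fst.prod (μ.map (projPair d i)).snd := by
    intro i; rw [← hmapP i]; exact hac.map (hπm i)
  -- densities
  set f : (Fin d → ℝ) × (Fin d → ℝ) → ℝ≥0∞ := μ.rnDeriv (μ.fst.prod μ.snd) with hfdef
  set p : Fin d → ℝ × ℝ → ℝ≥0∞ := fun i =>
    (μ.map (projPair d i)).rnDeriv
      ((μ.map (projPair d i)).fst.prod (μ.map (projPair d i)).snd) with hpdef
  set g : (Fin d → ℝ) × (Fin d → ℝ) → ℝ≥0∞ :=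
    fun z => ∏ i, p i (projPair d i z) with hgdef
  have hfm : Measurable f := Measure.measurable_rnDeriv _ _
  have hpm : ∀ i, Measurable (p i) := fun i => Measure.measurable_rnDeriv _ _
  have hgm : Measurable g := Finset.measurable_prod _ fun i _ => (hpm i).comp (hπm i)
  -- the y-sections of the p i integrate to 1
  set q : Fin d → ℝ → ℝ≥0∞ :=
    fun i b => ∫⁻ a, p i (a, b) ∂(μ.map (projPair d i)).fst with hqdef
  have hqm : ∀ i, Measurable (q i) := fun i => (hpm i).lintegral_prod_left'
  have hq1 : ∀ i, q i =ᵐ[(μ.map (projPair d i)).snd] 1 := by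
    intro i
    refine ae_eq_of_forall_setLIntegral_eq_of_sigmaFinite (hqm i) measurable_one ?_
    intro s hs _
    calc ∫⁻ b in s, q i b ∂(μ.map (projPair d i)).snd
        = ∫⁻ w, p i w
            ∂((μ.map (projPair d i)).fst.prod (((μ.map (projPair d i)).snd).restrict s)) :=
          (lintegral_prod_symm _ (hpm i).aemeasurable).symm
      _ = ∫⁻ w in Set.univ ×ˢ s, p i w
            ∂((μ.map (projPair d i)).fst.prod ((μ.map (projPair d i)).snd)) := by
          rw [← Measure.prod_restrict, Measure.restrict_univ]
      _ = μ.map (projPair d i) (Set.univ ×ˢ s) := Measure.setLIntegral_rnDeriv (habs i) _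
      _ = (μ.map (projPair d i)).snd s := by
          rw [Measure.snd_apply hs]
          congr 1
          ext w
          simp
      _ = ∫⁻ _ in s, 1 ∂(μ.map (projPair d i)).snd := by rw [setLIntegral_one]
  -- total mass of the candidate product density
  have hνfst : ∀ i, ν i = μ.fst.map (Function.eval i) := by
    intro i; rw [hfst, pi_map_eval]
  have hinner : ∀ b : Fin d → ℝ, ∫⁻ x, g (x, b) ∂μ.fst = ∏ i, q i (b i) := by
    intro b
    rw [hfst]
    calc ∫⁻ x, g (x, b) ∂Measure.pi ν
        = ∏ i, ∫⁻ t, p i (t, b i) ∂ν i :=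
          lintegral_pi_prod ν (fun i t => p i (t, b i))
            (fun i => (hpm i).comp (measurable_id.prodMk measurable_const))
      _ = ∏ i, q i (b i) := by
          refine Finset.prod_congr rfl fun i _ => ?_
          rw [hνfst i, ← hfst_i i]
  have hq1' : ∀ᵐ b ∂μ.snd, ∀ i, q i (b i) = 1 := by
    rw [ae_all_iff]
    intro i
    have h := hq1 i
    rw [hsnd_i i] at h
    have h' : ∀ᵐ t ∂(μ.snd.map (Function.eval i)), q i t = 1 := by
      filter_upwards [h] with t ht
      simpa using ht
    exact (ae_map_iff (measurable_pi_apply i).aemeasurable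
      (show MeasurableSet {t : ℝ | q i t = 1} from (hqm i) (measurableSet_singleton 1))).mp h'
  have hgint : ∫⁻ z, g z ∂(μ.fst.prod μ.snd) = 1 := by
    rw [lintegral_prod_symm g hgm.aemeasurable]
    have hae : (fun b => ∫⁻ a, g (a, b) ∂μ.fst) =ᵐ[μ.snd] fun _ => 1 := by
      filter_upwards [hq1'] with b hb
      rw [hinner b]
      exact Finset.prod_eq_one fun i _ => hb i
    rw [lintegral_congr_ae hae, lintegral_const, one_mul, measure_univ]
  -- a.e. positivity and finiteness
  have hf_pos : ∀ᵐ z ∂μ, 0 < f z := Measure.rnDeriv_pos hac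
  have hf_lt : ∀ᵐ z ∂μ, f z < ⊤ := hac.ae_le (Measure.rnDeriv_lt_top μ _)
  have hp_ae : ∀ᵐ z ∂μ, ∀ i, 0 < p i (projPair d i z) ∧ p i (projPair d i z) < ⊤ := by
    rw [ae_all_iff]
    intro i
    have h1 : ∀ᵐ w ∂(μ.map (projPair d i)), 0 < p i w ∧ p i w < ⊤ := by
      filter_upwards [Measure.rnDeriv_pos (habs i),
        (habs i).ae_le (Measure.rnDeriv_lt_top (μ.map (projPair d i)) _)] with w h2 h3
      exact ⟨h2, h3⟩
    exact (ae_map_iff (hπm i).aemeasurable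
      ((measurableSet_lt measurable_const (hpm i)).inter
        (measurableSet_lt (hpm i) measurable_const))).mp h1
  have hgf_ae : ∀ᵐ z ∂μ, 0 < g z ∧ g z < ⊤ := by
    filter_upwards [hp_ae] with z hz
    exact ⟨CanonicallyOrderedAdd.prod_pos.mpr fun i _ => (hz i).1,
      ENNReal.prod_lt_top fun i _ => (hz i).2⟩
  -- the density ratio
  set F : (Fin d → ℝ) × (Fin d → ℝ) → ℝ := fun z => (g z / f z).toReal with hFdef
  have hlintF : ∫⁻ z, g z / f z ∂μ ≤ 1 := by
    have h1 := lintegral_withDensity_eq_lintegral_mul (μ.fst.prod μ.snd) hfm (hgm.div hfm)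
    have h2 : (μ.fst.prod μ.snd).withDensity f = μ := by
      rw [hfdef]; exact Measure.withDensity_rnDeriv_eq μ _ hac
    rw [h2] at h1
    calc ∫⁻ z, g z / f z ∂μ
        = ∫⁻ z, (f * fun z => g z / f z) z ∂(μ.fst.prod μ.snd) := h1
      _ ≤ ∫⁻ z, g z ∂(μ.fst.prod μ.snd) := by
          refine lintegral_mono fun z => ?_
          simp only [Pi.mul_apply]
          calc f z * (g z / f z) = g z * (f z * (f z)⁻¹) := by
                rw [div_eq_mul_inv]; ring
            _ ≤ g z * 1 := mul_le_mul_right (ENNReal.mul_inv_le_one _) _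
            _ = g z := mul_one _
      _ = 1 := hgint
  have hFint : Integrable F μ :=
    integrable_toReal_of_lintegral_ne_top (hgm.div hfm).aemeasurable
      (hlintF.trans_lt ENNReal.one_lt_top).ne
  have hgf_lt : ∀ᵐ z ∂μ, g z / f z < ⊤ := by
    filter_upwards [hf_pos, hgf_ae] with z h1 h2
    exact ENNReal.div_lt_top h2.2.ne h1.ne'
  have hFle : ∫ z, F z ∂μ ≤ 1 := by
    have h1 : ∫ z, F z ∂μ = (∫⁻ z, g z / f z ∂μ).toReal :=
      integral_toReal (hgm.div hfm).aemeasurable hgf_lt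
    rw [h1]
    calc (∫⁻ z, g z / f z ∂μ).toReal ≤ (1 : ℝ≥0∞).toReal :=
          ENNReal.toReal_mono ENNReal.one_ne_top hlintF
      _ = 1 := by simp
  -- the component log-likelihood ratios
  set h : Fin d → (Fin d → ℝ) × (Fin d → ℝ) → ℝ :=
    fun i z => llr (μ.map (projPair d i))
      ((μ.map (projPair d i)).fst.prod (μ.map (projPair d i)).snd) (projPair d i z) with hhdef
  have hhm : ∀ i, Measurable (h i) := fun i => (measurable_llr _ _).comp (hπm i)
  set m : Fin d → (Fin d → ℝ) × (Fin d → ℝ) → ℝ := fun i z => max (-h i z) 0 with hmdef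
  have hm_nonneg : ∀ i z, 0 ≤ m i z := fun i z => le_max_right _ _
  have hm_int : ∀ i, Integrable (m i) μ := by
    intro i
    have h1 := integrable_max_neg_llr (μ.map (projPair d i)) _ (habs i)
    exact (integrable_map_measure
      ((measurable_llr _ _).neg.max measurable_const).aestronglyMeasurable
      (hπm i).aemeasurable).mp h1
  -- the key a.e. identity
  have hSid : ∀ᵐ z ∂μ,
      (llr μ (μ.fst.prod μ.snd) z - ∑ i, h i z = -Real.log (F z)) ∧ 0 < F z := by
    filter_upwards [hf_pos, hf_lt, hp_ae, hgf_ae] with z h1 h2 h3 h4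
    have hti : ∀ i, (p i (projPair d i z)).toReal ≠ 0 := fun i =>
      (ENNReal.toReal_pos (h3 i).1.ne' (h3 i).2.ne).ne'
    have hSz : ∑ i, h i z = Real.log (g z).toReal := by
      have hgz : (g z).toReal = ∏ i, (p i (projPair d i z)).toReal := by
        rw [hgdef]; exact ENNReal.toReal_prod _ _
      rw [hgz, Real.log_prod (fun i _ => hti i)]
      exact Finset.sum_congr rfl fun i _ => rfl
    have hFz : F z = (g z).toReal / (f z).toReal := by
      rw [hFdef]; exact ENNReal.toReal_div _ _
    have hfz0 : (f z).toReal ≠ 0 := (ENNReal.toReal_pos h1.ne' h2.ne).ne'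
    have hgz0 : (g z).toReal ≠ 0 := (ENNReal.toReal_pos h4.1.ne' h4.2.ne).ne'
    constructor
    · rw [hSz, hFz, Real.log_div hgz0 hfz0]
      have hllrz : llr μ (μ.fst.prod μ.snd) z = Real.log (f z).toReal := rfl
      rw [hllrz]; ring
    · rw [hFz]
      exact div_pos (lt_of_le_of_ne ENNReal.toReal_nonneg (Ne.symm hgz0))
        (lt_of_le_of_ne ENNReal.toReal_nonneg (Ne.symm hfz0))
  -- integrability of the components
  set B : (Fin d → ℝ) × (Fin d → ℝ) → ℝ :=
    fun z => |llr μ (μ.fst.prod μ.snd) z| + F z + ∑ j, m j z with hBdef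
  have hB_int : Integrable B μ :=
    (hint.abs.add hFint).add (integrable_finset_sum _ fun j _ => hm_int j)
  have hbound : ∀ i, ∀ᵐ z ∂μ, ‖h i z‖ ≤ B z := by
    intro i
    filter_upwards [hSid] with z hz
    obtain ⟨hz1, hz2⟩ := hz
    rw [Real.norm_eq_abs, abs_le]
    have hFnn : (0:ℝ) ≤ F z := hz2.le
    have hlogle : Real.log (F z) ≤ F z := (Real.log_le_sub_one_of_pos hz2).trans (by linarith)
    have habsle : llr μ (μ.fst.prod μ.snd) z ≤ |llr μ (μ.fst.prod μ.snd) z| := le_abs_self _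
    have hm_i : -h i z ≤ m i z := le_max_left _ _
    have hm_sum : m i z ≤ ∑ j, m j z :=
      Finset.single_le_sum (fun j _ => hm_nonneg j z) (Finset.mem_univ i)
    have hsum_nn : (0:ℝ) ≤ ∑ j, m j z := Finset.sum_nonneg fun j _ => hm_nonneg j z
    have hBz : B z = |llr μ (μ.fst.prod μ.snd) z| + F z + ∑ j, m j z := rfl
    constructor
    · have habs_nn : (0:ℝ) ≤ |llr μ (μ.fst.prod μ.snd) z| := abs_nonneg _
      linarith
    · have h4 : ∑ j ∈ Finset.univ.erase i, (-(h j z))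
          ≤ ∑ j ∈ Finset.univ.erase i, m j z :=
        Finset.sum_le_sum fun j _ => le_max_left _ _
      have h5 : ∑ j ∈ Finset.univ.erase i, m j z ≤ ∑ j, m j z :=
        Finset.sum_le_sum_of_subset_of_nonneg (Finset.erase_subset _ _)
          (fun j _ _ => hm_nonneg j z)
      have h6 : h i z + ∑ j ∈ Finset.univ.erase i, h j z = ∑ j, h j z :=
        Finset.add_sum_erase Finset.univ (fun j => h j z) (Finset.mem_univ i)
      have h7 : -∑ j ∈ Finset.univ.erase i, h j z
          = ∑ j ∈ Finset.univ.erase i, (-(h j z)) := by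
        rw [Finset.sum_neg_distrib]
      linarith
  have hh_int : ∀ i, Integrable (h i) μ := fun i =>
    Integrable.mono' hB_int (hhm i).aestronglyMeasurable (hbound i)
  -- the final inequality for integrals
  have hS_int : Integrable (fun z => ∑ i, h i z) μ :=
    integrable_finset_sum _ fun i _ => hh_int i
  have hD_int : Integrable (fun z => llr μ (μ.fst.prod μ.snd) z - ∑ i, h i z) μ :=
    hint.sub hS_int
  have hkey : ∫ z, (∑ i, h i z) ∂μ ≤ ∫ z, llr μ (μ.fst.prod μ.snd) z ∂μ := by
    have h1 : ∫ z, -(llr μ (μ.fst.prod μ.snd) z - ∑ i, h i z) ∂μ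
        ≤ ∫ z, (F z - 1) ∂μ := by
      refine integral_mono_ae hD_int.neg (hFint.sub (integrable_const 1)) ?_
      filter_upwards [hSid] with z hz
      have := Real.log_le_sub_one_of_pos hz.2
      rw [hz.1]
      simpa using this
    have h2 : ∫ z, -(llr μ (μ.fst.prod μ.snd) z - ∑ i, h i z) ∂μ
        = ∫ z, (∑ i, h i z) ∂μ - ∫ z, llr μ (μ.fst.prod μ.snd) z ∂μ := by
      rw [integral_neg, integral_sub hint hS_int]
      ring
    have h3 : ∫ z, (F z - 1) ∂μ = ∫ z, F z ∂μ - 1 := by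
      rw [integral_sub hFint (integrable_const 1), integral_const]
      simp [measure_univ]
    rw [h2, h3] at h1
    linarith [hFle]
  -- conclusion
  have hllr_int : ∀ i, Integrable (llr (μ.map (projPair d i))
      ((μ.map (projPair d i)).fst.prod (μ.map (projPair d i)).snd)) (μ.map (projPair d i)) := by
    intro i
    rw [integrable_map_measure (stronglyMeasurable_llr _ _).aestronglyMeasurable
      (hπm i).aemeasurable]
    exact hh_int i
  refine ⟨habs, hllr_int, ?_⟩
  have hmap_int : ∀ i, ∫ w, llr (μ.map (projPair d i))
      ((μ.map (projPair d i)).fst.prod (μ.map (projPair d i)).snd) w ∂(μ.map (projPair d i))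
      = ∫ z, h i z ∂μ := fun i =>
    integral_map (hπm i).aemeasurable (stronglyMeasurable_llr _ _).aestronglyMeasurable
  calc ∑ i, ∫ w, llr (μ.map (projPair d i))
        ((μ.map (projPair d i)).fst.prod (μ.map (projPair d i)).snd) w ∂(μ.map (projPair d i))
      = ∑ i, ∫ z, h i z ∂μ := Finset.sum_congr rfl fun i _ => hmap_int i
    _ = ∫ z, ∑ i, h i z ∂μ := (integral_finset_sum _ fun i _ => hh_int i).symm
    _ ≤ ∫ z, llr μ (μ.fst.prod μ.snd) z ∂μ := hkey

end mainaux

/-- Superadditivity of mutual information for a source with independent components: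
if the first marginal of the joint law `μ` of `(X, Y)` is a product measure, then
`I(X; Y) ≥ Σ_i I(X_i; Y_i)`. -/

theorem mutualInfo_superadditive (d : ℕ) (hd : 1 ≤ d)
    (μ : Measure ((Fin d → ℝ) × (Fin d → ℝ))) (hμ : IsProbabilityMeasure μ)
    (hindep : ∃ ν : Fin d → Measure ℝ, (∀ i, IsProbabilityMeasure (ν i)) ∧
      μ.fst = Measure.pi ν) :
    ∑ i, klDiv (μ.map (fun p => (p.1 i, p.2 i)))
        ((μ.map (fun p => (p.1 i, p.2 i))).fst.prod
          ((μ.map (fun p => (p.1 i, p.2 i))).snd))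
      ≤ klDiv μ (μ.fst.prod μ.snd) := by
  haveI := hμ
  obtain ⟨ν, hν, hfst⟩ := hindep
  by_cases hμP : μ ≪ μ.fst.prod μ.snd ∧ Integrable (llr μ (μ.fst.prod μ.snd)) μ
  · obtain ⟨hac, hint⟩ := hμP
    obtain ⟨habs, hInt, hle⟩ := aux_main d μ ν hν hfst hac hint
    have hproj : ∀ i : Fin d,
        (fun p : (Fin d → ℝ) × (Fin d → ℝ) => (p.1 i, p.2 i)) = projPair d i :=
      fun i => rfl
    calc ∑ i, klDiv (μ.map (fun p => (p.1 i, p.2 i)))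
          ((μ.map (fun p => (p.1 i, p.2 i))).fst.prod ((μ.map (fun p => (p.1 i, p.2 i))).snd))
        = ∑ i, ((∫ w, llr (μ.map (projPair d i))
            ((μ.map (projPair d i)).fst.prod (μ.map (projPair d i)).snd) w
              ∂(μ.map (projPair d i)) : ℝ) : EReal) := by
          refine Finset.sum_congr rfl fun i _ => ?_
          rw [hproj i]
          simp only [klDiv]
          rw [if_pos ⟨habs i, hInt i⟩]
      _ = ((∑ i, ∫ w, llr (μ.map (projPair d i))
            ((μ.map (projPair d i)).fst.prod (μ.map (projPair d i)).snd) w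
              ∂(μ.map (projPair d i)) : ℝ) : EReal) := (ereal_coe_sum _ _).symm
      _ ≤ ((∫ z, llr μ (μ.fst.prod μ.snd) z ∂μ : ℝ) : EReal) := EReal.coe_le_coe_iff.mpr hle
      _ = klDiv μ (μ.fst.prod μ.snd) := by
          simp only [klDiv]
          rw [if_pos ⟨hac, hint⟩]
  · have h1 : klDiv μ (μ.fst.prod μ.snd) = ⊤ := by
      simp only [klDiv]
      rw [if_neg hμP]
    rw [h1]
    exact le_top
end

section
/- Let Y be a real random variable with E[ln(1 + |Y|)] < ∞ and P(Y ≠ 0) > 0. Then there exists a unique s > 0 such that E[ln(1 + Y²/s²)] = ln 4. -/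
open MeasureTheory

/-- Existence and uniqueness of the CB-strength: for a real random variable `Y`
with `E[ln(1 + |Y|)] < ∞` and `P(Y ≠ 0) > 0`, there is a unique `s > 0` such that
`E[ln(1 + Y²/s²)] = ln 4`. -/
theorem cbStrength_exists_unique {Ω : Type*} [MeasurableSpace Ω] (P : Measure Ω)
    [IsProbabilityMeasure P] (Y : Ω → ℝ) (hY : Measurable Y)
    (hint : Integrable (fun ω => Real.log (1 + |Y ω|)) P)
    (hne : P {ω | Y ω ≠ 0} ≠ 0) :
    ∃! s : ℝ, 0 < s ∧ (∫ ω, Real.log (1 + (Y ω) ^ 2 / s ^ 2) ∂P) = Real.log 4 := by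
  classical
  open Filter Set in
  set g : ℝ → Ω → ℝ := fun s ω => Real.log (1 + (Y ω) ^ 2 / s ^ 2) with hg
  set F : ℝ → ℝ := fun s => ∫ ω, g s ω ∂P with hFdef
  -- basic pointwise facts
  have harg : ∀ (s : ℝ) (ω : Ω), (1 : ℝ) ≤ 1 + (Y ω) ^ 2 / s ^ 2 := by
    intro s ω
    have h : 0 ≤ (Y ω) ^ 2 / s ^ 2 := by positivity
    linarith
  have hnonneg : ∀ (s : ℝ) (ω : Ω), 0 ≤ g s ω := fun s ω =>
    Real.log_nonneg (harg s ω)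
  have hmeas : ∀ s : ℝ, Measurable (g s) := fun s =>
    (measurable_const.add ((hY.pow_const 2).div_const _)).log
  -- the key pointwise bound
  have hbound : ∀ s : ℝ, 0 < s → ∀ ω : Ω,
      g s ω ≤ 2 * Real.log (1 + |Y ω|) + 2 * Real.log (1 + 1 / s) := by
    intro s hs ω
    set y := Y ω
    have h1 : 1 + y ^ 2 / s ^ 2 ≤ ((1 + |y|) * (1 + 1 / s)) ^ 2 := by
      have hy2 : y ^ 2 / s ^ 2 = (|y| / s) ^ 2 := by
        rw [div_pow, sq_abs]
      have hya : 0 ≤ |y| / s := by positivity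
      have h2 : 1 + |y| / s ≤ (1 + |y|) * (1 + 1 / s) := by
        have h3 : (1 + |y|) * (1 + 1 / s) = 1 + |y| + 1 / s + |y| / s := by
          field_simp; ring
        have h4 : (0:ℝ) ≤ 1 / s := by positivity
        have h5 : (0:ℝ) ≤ |y| := abs_nonneg y
        linarith
      rw [hy2]
      nlinarith [hya]
    have hlog : g s ω ≤ Real.log (((1 + |y|) * (1 + 1 / s)) ^ 2) :=
      Real.log_le_log (by linarith [harg s ω]) h1
    rw [Real.log_pow] at hlog
    have hmul : Real.log ((1 + |y|) * (1 + 1 / s))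
        = Real.log (1 + |y|) + Real.log (1 + 1 / s) := by
      apply Real.log_mul
      · positivity
      · positivity
    rw [hmul] at hlog
    push_cast at hlog
    linarith
  -- integrability for each positive s
  have hint_s : ∀ s : ℝ, 0 < s → Integrable (g s) P := by
    intro s hs
    apply Integrable.mono'
      ((hint.const_mul 2).add (integrable_const (2 * Real.log (1 + 1 / s))))
      ((hmeas s).aestronglyMeasurable)
    filter_upwards with ω
    rw [Real.norm_eq_abs, abs_of_nonneg (hnonneg s ω)]
    exact hbound s hs ω
  -- strict antitonicity on (0, ∞)
  have hanti : StrictAntiOn F (Ioi (0:ℝ)) := by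
    intro a ha b hb hab
    simp only [mem_Ioi] at ha hb
    have hdiff : Integrable (fun ω => g a ω - g b ω) P :=
      (hint_s a ha).sub (hint_s b hb)
    have hle : ∀ ω, g b ω ≤ g a ω := by
      intro ω
      apply Real.log_le_log (by linarith [harg b ω])
      have : (Y ω) ^ 2 / b ^ 2 ≤ (Y ω) ^ 2 / a ^ 2 :=
        div_le_div_of_nonneg_left (by positivity) (pow_pos ha 2)
          (by nlinarith)
      linarith
    have hpos : 0 < ∫ ω, (g a ω - g b ω) ∂P := by
      rw [integral_pos_iff_support_of_nonneg (fun ω => by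
        simpa using sub_nonneg.2 (hle ω)) hdiff]
      have hsub : {ω | Y ω ≠ 0} ⊆ Function.support fun ω => g a ω - g b ω := by
        intro ω hω
        have hy : (0:ℝ) < (Y ω) ^ 2 := by
          have h1 : (0:ℝ) < |Y ω| := abs_pos.2 hω
          nlinarith [sq_abs (Y ω)]
        have hlt : g b ω < g a ω := by
          apply Real.log_lt_log (by linarith [harg b ω])
          have : (Y ω) ^ 2 / b ^ 2 < (Y ω) ^ 2 / a ^ 2 :=
            div_lt_div_of_pos_left hy (pow_pos ha 2) (by nlinarith)
          linarith
        simp only [Function.mem_support]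
        intro h
        exact absurd (sub_eq_zero.1 h).symm hlt.ne
      have h0 : 0 < P {ω | Y ω ≠ 0} := pos_iff_ne_zero.2 hne
      exact lt_of_lt_of_le h0 (measure_mono hsub)
    have hsub' := integral_sub (hint_s a ha) (hint_s b hb)
    rw [hsub'] at hpos
    have hFa : F a = ∫ ω, g a ω ∂P := rfl
    have hFb : F b = ∫ ω, g b ω ∂P := rfl
    linarith
  -- continuity at every positive point
  have hcont : ∀ s₀ : ℝ, 0 < s₀ → ContinuousAt F s₀ := by
    intro s₀ hs₀
    apply continuousAt_of_dominated
      (bound := fun ω => 2 * Real.log (1 + |Y ω|) + 2 * Real.log (1 + 2 / s₀))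
    · filter_upwards with s using (hmeas s).aestronglyMeasurable
    · have hev : ∀ᶠ s in nhds s₀, s₀ / 2 < s := eventually_gt_nhds (by linarith)
      filter_upwards [hev] with s hs
      filter_upwards with ω
      rw [Real.norm_eq_abs, abs_of_nonneg (hnonneg s ω)]
      have hs' : 0 < s := by linarith
      refine (hbound s hs' ω).trans ?_
      have h1 : (1:ℝ) / s ≤ 2 / s₀ := by
        rw [div_le_div_iff₀ hs' hs₀]
        nlinarith
      have : Real.log (1 + 1 / s) ≤ Real.log (1 + 2 / s₀) :=
        Real.log_le_log (by positivity) (by linarith)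
      linarith
    · exact (hint.const_mul 2).add (integrable_const _)
    · filter_upwards with ω
      apply ContinuousAt.log
      · exact continuousAt_const.add
          (continuousAt_const.div ((continuous_pow 2).continuousAt)
            (by positivity))
      · have := harg s₀ ω
        intro h; rw [h] at this; linarith
  -- tendsto 0 at infinity
  have htop : Tendsto F atTop (nhds 0) := by
    have h := tendsto_integral_filter_of_dominated_convergence
      (μ := P) (F := g) (f := fun _ => (0:ℝ))
      (l := atTop)
      (fun ω => 2 * Real.log (1 + |Y ω|) + 2 * Real.log 2)
      (Filter.Eventually.of_forall fun s => (hmeas s).aestronglyMeasurable)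
      ?_ ((hint.const_mul 2).add (integrable_const _)) ?_
    · simpa using h
    · filter_upwards [eventually_ge_atTop (1:ℝ)] with s hs
      filter_upwards with ω
      rw [Real.norm_eq_abs, abs_of_nonneg (hnonneg s ω)]
      have hs' : (0:ℝ) < s := by linarith
      refine (hbound s hs' ω).trans ?_
      have h1 : (1:ℝ) / s ≤ 1 := by
        rw [div_le_one hs']; exact hs
      have : Real.log (1 + 1 / s) ≤ Real.log 2 :=
        Real.log_le_log (by positivity) (by linarith)
      linarith
    · filter_upwards with ω
      have h1 : Tendsto (fun s : ℝ => 1 + (Y ω) ^ 2 / s ^ 2) atTop (nhds 1) := by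
        have h2 : Tendsto (fun s : ℝ => (Y ω) ^ 2 / s ^ 2) atTop (nhds 0) :=
          tendsto_const_nhds.div_atTop (tendsto_pow_atTop two_ne_zero)
        simpa using tendsto_const_nhds.add h2
      have h3 := (Real.continuousAt_log one_ne_zero).tendsto.comp h1
      simpa [Function.comp_def, hg] using h3
  -- existence of a small s with F s ≥ log 4
  have hsmall : ∃ s₀ : ℝ, 0 < s₀ ∧ Real.log 4 ≤ F s₀ := by
    obtain ⟨c, hcpos, hn⟩ : ∃ c : ℝ, 0 < c ∧ P {ω | c ≤ |Y ω|} ≠ 0 := by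
      obtain ⟨n, hn⟩ : ∃ n : ℕ, P {ω | (1:ℝ) / (n + 1) ≤ |Y ω|} ≠ 0 := by
        by_contra h
        push_neg at h
        have hU : {ω | Y ω ≠ 0} ⊆ ⋃ n : ℕ, {ω | (1:ℝ) / (n + 1) ≤ |Y ω|} := by
          intro ω hω
          obtain ⟨n, hn⟩ := exists_nat_one_div_lt (abs_pos.2 hω)
          exact mem_iUnion.2 ⟨n, hn.le⟩
        exact hne (measure_mono_null hU (measure_iUnion_null h))
      exact ⟨1 / (n + 1), by positivity, hn⟩
    have hAmeas : MeasurableSet {ω | c ≤ |Y ω|} := measurableSet_le measurable_const hY.abs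
    obtain ⟨p, hp, hppos⟩ : ∃ p : ℝ, p = (P {ω | c ≤ |Y ω|}).toReal ∧ 0 < p :=
      ⟨_, rfl, ENNReal.toReal_pos hn (measure_ne_top _ _)⟩
    have hl4 : (0:ℝ) < Real.log 4 := Real.log_pos (by norm_num)
    obtain ⟨t, ht, htpos⟩ : ∃ t : ℝ, t = Real.log 4 / p ∧ 0 < t := ⟨_, rfl, by positivity⟩
    obtain ⟨s₀, hs₀, hs₀pos⟩ : ∃ s : ℝ, s = c / Real.exp t ∧ 0 < s := ⟨_, rfl, by positivity⟩
    refine ⟨s₀, hs₀pos, ?_⟩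
    have hkey : ∀ ω ∈ {ω | c ≤ |Y ω|}, t ≤ g s₀ ω := by
      intro ω hω
      have hcy : c ≤ |Y ω| := hω
      have hy2 : c ^ 2 ≤ (Y ω) ^ 2 := by
        have := sq_abs (Y ω)
        nlinarith [abs_nonneg (Y ω)]
      have hcs : c ^ 2 / s₀ ^ 2 = Real.exp t ^ 2 := by
        rw [hs₀, div_pow, div_div_eq_mul_div,
          mul_div_cancel_left₀ _ (pow_ne_zero 2 hcpos.ne')]
      have h1 : Real.exp t ≤ 1 + (Y ω) ^ 2 / s₀ ^ 2 := by
        have h2 : c ^ 2 / s₀ ^ 2 ≤ (Y ω) ^ 2 / s₀ ^ 2 := by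
          apply div_le_div_of_nonneg_right hy2 (by positivity)
        rw [hcs] at h2
        nlinarith [Real.exp_pos t]
      calc t = Real.log (Real.exp t) := (Real.log_exp t).symm
        _ ≤ g s₀ ω := Real.log_le_log (Real.exp_pos t) h1
    have hmono : ∫ ω, Set.indicator {ω | c ≤ |Y ω|} (fun _ => t) ω ∂P ≤ F s₀ := by
      apply integral_mono ((integrable_const t).indicator hAmeas) (hint_s s₀ hs₀pos)
      intro ω
      by_cases hω : ω ∈ {ω | c ≤ |Y ω|}
      · simpa [Set.indicator_of_mem hω] using hkey ω hω
      · simpa [Set.indicator_of_notMem hω] using hnonneg s₀ ω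
    rw [integral_indicator_const t hAmeas, measureReal_def] at hmono
    have heq : (P {ω | c ≤ |Y ω|}).toReal • t = Real.log 4 := by
      rw [smul_eq_mul, ← hp, ht, mul_div_cancel₀ _ hppos.ne']
    linarith [hmono, heq.symm.le]
  obtain ⟨s₀, hs₀pos, hFs₀⟩ := hsmall
  -- a large s with F s ≤ log 4
  have hl4 : (0:ℝ) < Real.log 4 := Real.log_pos (by norm_num)
  obtain ⟨s₁, hs₁le, hs₁ge⟩ :=
    ((htop.eventually_lt_const hl4).and (eventually_ge_atTop s₀)).exists
  -- intermediate value theorem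
  have hcont' : ContinuousOn F (Icc s₀ s₁) := fun x hx =>
    (hcont x (lt_of_lt_of_le hs₀pos hx.1)).continuousWithinAt
  obtain ⟨s, hsmem, hFs⟩ :=
    intermediate_value_Icc' hs₁ge hcont' ⟨hs₁le.le, hFs₀⟩
  have hspos : 0 < s := lt_of_lt_of_le hs₀pos hsmem.1
  refine ⟨s, ⟨hspos, hFs⟩, ?_⟩
  rintro u ⟨hupos, hFu⟩
  exact hanti.injOn (mem_Ioi.2 hupos) (mem_Ioi.2 hspos) (hFu.trans hFs.symm)
end

section
/- Let γ > 0 and let X be a Cauchy random variable with scale γ, i.e., with density x ↦ γ/(π(γ² + x²)). Then E[ln(1 + X²/γ²)] = ln 4, i.e., ∫_ℝ ln(1 + x²) · (1/(π(1 + x²))) dx = ln 4; consequently the CB-strength of X equals γ, and the differential entropy of X equals ln(4πγ). -/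
open MeasureTheory Real Set intervalIntegral
open scoped NNReal ENNReal

/-- The Cauchy law with scale `γ`: the measure on `ℝ` with density
`x ↦ γ / (π * (γ² + x²))` with respect to Lebesgue measure. -/
noncomputable def cauchyLaw (γ : ℝ) : Measure ℝ :=
  volume.withDensity fun x => ENNReal.ofReal (γ / (π * (γ ^ 2 + x ^ 2)))

/-- The CB-strength of a law `ν` on `ℝ`:
`inf {s > 0 : E[ln(1 + Y²/s²)] ≤ ln 4}`. -/
noncomputable def cbStrength (ν : Measure ℝ) : ℝ :=
  sInf {s : ℝ | 0 < s ∧ (∫ y, Real.log (1 + y ^ 2 / s ^ 2) ∂ν) ≤ Real.log 4}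


-- log is integrable on (0, 1]
lemma integrableOn_log_Ioc01 : IntegrableOn Real.log (Ioc (0:ℝ) 1) := by
  have hε : ∀ n : ℕ, (0:ℝ) < 1 / (n + 1) := fun n => by positivity
  have hε1 : ∀ n : ℕ, 1 / ((n:ℝ) + 1) ≤ 1 := fun n => by
    rw [div_le_one (by positivity)]; linarith
  have h0 : ∀ n : ℕ, (0:ℝ) ∉ Set.uIcc (1 / ((n:ℝ)+1)) 1 := by
    intro n hx
    rcases Set.mem_uIcc.mp hx with h | h
    · exact absurd h.1 (hε n).not_ge
    · linarith [h.2, hε n]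
  refine integrableOn_Ioc_of_intervalIntegral_norm_bounded_left (l := Filter.atTop)
    (a := fun n : ℕ => 1 / ((n:ℝ) + 1)) (I := 1) (fun n => ?_)
    tendsto_one_div_add_atTop_nhds_zero_nat ?_
  · rw [← intervalIntegrable_iff_integrableOn_Ioc_of_le (hε1 n)]
    exact intervalIntegrable_log (h0 n)
  · filter_upwards with n
    have key : (∫ x in Ioc (1 / ((n:ℝ)+1)) 1, ‖Real.log x‖) = ∫ x in (1 / ((n:ℝ)+1))..1, -Real.log x := by
      rw [← integral_of_le (hε1 n)]
      apply integral_congr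
      intro x hx
      rw [Set.uIcc_of_le (hε1 n)] at hx
      show ‖Real.log x‖ = -Real.log x
      rw [Real.norm_eq_abs, abs_of_nonpos (Real.log_nonpos (by linarith [hx.1, hε n]) hx.2)]
    rw [key, intervalIntegral.integral_neg, integral_log]
    set ε := 1 / ((n:ℝ)+1) with hεdef
    have h1 : -Real.log ε ≤ 1/ε - 1 := by
      have := Real.log_le_sub_one_of_pos (x := 1/ε) (by positivity)
      rw [Real.log_div one_ne_zero (by positivity), Real.log_one] at this
      linarith
    have h2 : 0 ≤ -Real.log ε := by
      exact neg_nonneg.mpr (Real.log_nonpos (hε n).le (hε1 n))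
    simp only [Real.log_one]
    nlinarith [mul_le_mul_of_nonneg_left h1 (hε n).le, hε n, hε1 n]

lemma intervalIntegrable_log' {b : ℝ} (hb : 0 < b) : IntervalIntegrable Real.log volume 0 b := by
  rw [intervalIntegrable_iff_integrableOn_Ioc_of_le hb.le]
  rcases le_total b 1 with h | h
  · exact integrableOn_log_Ioc01.mono_set (Ioc_subset_Ioc le_rfl h)
  · have h2 : IntegrableOn Real.log (Icc 1 b) := by
      apply ContinuousOn.integrableOn_Icc
      exact Real.continuousOn_log.mono (fun x hx => by simp; linarith [hx.1])
    exact (integrableOn_log_Ioc01.union h2).mono_set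
      (fun x hx => by rcases le_total x 1 with h'|h' <;> [exact Or.inl ⟨hx.1, h'⟩; exact Or.inr ⟨h', hx.2⟩])

lemma intervalIntegrable_log_sin₀ : IntervalIntegrable (fun x => Real.log (Real.sin x)) volume 0 (π/2) := by
  have hpi : (0:ℝ) < π/2 := by positivity
  rw [intervalIntegrable_iff_integrableOn_Ioc_of_le hpi.le]
  have hg : IntegrableOn (fun x => Real.log (π/2) - Real.log x) (Ioc 0 (π/2)) := by
    apply Integrable.sub (μ := volume.restrict (Ioc 0 (π/2))) (f := fun _ : ℝ => Real.log (π/2)) (g := fun x : ℝ => Real.log x) (integrableOn_const measure_Ioc_lt_top.ne)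
    exact (intervalIntegrable_iff_integrableOn_Ioc_of_le hpi.le).mp (intervalIntegrable_log' hpi)
  apply Integrable.mono hg
  · apply ContinuousOn.aestronglyMeasurable ?_ measurableSet_Ioc
    intro x hx
    have hs : Real.sin x ≠ 0 := by
      have := Real.sin_pos_of_pos_of_lt_pi hx.1 (by linarith [hx.2, Real.pi_pos])
      positivity
    exact (Real.continuousAt_log hs).comp_continuousWithinAt (Real.continuous_sin.continuousWithinAt)
  · rw [ae_restrict_iff' measurableSet_Ioc]
    filter_upwards with x hx
    have hxl : 0 < x := hx.1
    have hxu : x ≤ π/2 := hx.2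
    have hsin_pos : 0 < Real.sin x := Real.sin_pos_of_pos_of_lt_pi hxl (by linarith [Real.pi_pos])
    have hsin_le : Real.sin x ≤ 1 := Real.sin_le_one x
    have hjordan : 2/π * x ≤ Real.sin x := Real.mul_le_sin hxl.le hxu
    have hbound : -Real.log (Real.sin x) ≤ Real.log (π/2) - Real.log x := by
      have h1 : Real.log (2/π * x) ≤ Real.log (Real.sin x) :=
        Real.log_le_log (by positivity) hjordan
      have h2 : Real.log (2/π * x) = Real.log (2/π) + Real.log x :=
        Real.log_mul (by positivity) hxl.ne'
      have h3 : Real.log (2/π) = -Real.log (π/2) := by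
        rw [← Real.log_inv]; norm_num
      linarith
    rw [Real.norm_eq_abs, abs_of_nonpos (Real.log_nonpos hsin_pos.le hsin_le)]
    have : 0 ≤ Real.log (π/2) - Real.log x := by linarith [neg_nonneg.mpr (Real.log_nonpos hsin_pos.le hsin_le)]
    rw [Real.norm_eq_abs, abs_of_nonneg this]
    exact hbound

lemma intervalIntegrable_log_cos₀ : IntervalIntegrable (fun x => Real.log (Real.cos x)) volume 0 (π/2) := by
  have h := (intervalIntegrable_log_sin₀.comp_sub_left (π/2)).symm
  simp only [Real.sin_pi_div_two_sub, sub_self, sub_zero] at h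
  exact h

lemma integral_log_cos_eq : (∫ x in (0:ℝ)..(π/2), Real.log (Real.cos x))
    = ∫ x in (0:ℝ)..(π/2), Real.log (Real.sin x) := by
  have : (∫ x in (0:ℝ)..(π/2), Real.log (Real.cos x))
      = ∫ x in (0:ℝ)..(π/2), Real.log (Real.sin (π/2 - x)) := by
    simp only [Real.sin_pi_div_two_sub]
  rw [this, intervalIntegral.integral_comp_sub_left (fun y => Real.log (Real.sin y)) (π/2)]
  norm_num

lemma intervalIntegrable_log_sin' : IntervalIntegrable (fun x => Real.log (Real.sin x)) volume (π/2) π := by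
  have h := (intervalIntegrable_log_sin₀.comp_sub_left π).symm
  simp only [Real.sin_pi_sub, sub_zero] at h
  have h2 : π - π/2 = π/2 := by ring
  rw [h2] at h
  exact h

lemma integral_log_sin_pi : (∫ x in (0:ℝ)..π, Real.log (Real.sin x))
    = 2 * ∫ x in (0:ℝ)..(π/2), Real.log (Real.sin x) := by
  rw [← intervalIntegral.integral_add_adjacent_intervals (b := π/2)
    intervalIntegrable_log_sin₀ intervalIntegrable_log_sin']
  have : (∫ x in (π/2:ℝ)..π, Real.log (Real.sin x))
      = ∫ x in (0:ℝ)..(π/2), Real.log (Real.sin x) := by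
    have h1 : (∫ x in (0:ℝ)..(π/2), Real.log (Real.sin (π - x)))
        = ∫ x in (π - π/2 : ℝ)..(π - 0), Real.log (Real.sin x) :=
      intervalIntegral.integral_comp_sub_left (fun y => Real.log (Real.sin y)) π
    simp only [Real.sin_pi_sub, sub_zero] at h1
    rw [show π - π/2 = π/2 by ring] at h1
    exact h1.symm
  rw [this]; ring

lemma integral_log_sin_pi_div_two : (∫ x in (0:ℝ)..(π/2), Real.log (Real.sin x)) = -(π/2) * Real.log 2 := by
  set I := ∫ x in (0:ℝ)..(π/2), Real.log (Real.sin x) with hI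
  have hdouble : (∫ x in (0:ℝ)..(π/2), Real.log (Real.sin (2*x))) = I := by
    have h := intervalIntegral.integral_comp_mul_left (fun y => Real.log (Real.sin y))
      (a := 0) (b := π/2) (c := 2) two_ne_zero
    simp only [mul_zero] at h
    have h2 : (2:ℝ) * (π/2) = π := by ring
    rw [h2] at h
    rw [h, integral_log_sin_pi, smul_eq_mul]
    ring
  have hint2 : IntervalIntegrable (fun x => Real.log (Real.sin (2*x))) volume 0 (π/2) := by
    have h := (intervalIntegrable_log_sin₀.trans intervalIntegrable_log_sin').comp_mul_left (c := 2)
    norm_num at h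
    exact h
  have hsum : (∫ x in (0:ℝ)..(π/2), (Real.log (Real.sin x) + Real.log (Real.cos x)))
      = 2 * I := by
    rw [intervalIntegral.integral_add intervalIntegrable_log_sin₀ intervalIntegrable_log_cos₀,
      integral_log_cos_eq]
    ring
  have hcongr : (∫ x in (0:ℝ)..(π/2), (Real.log (Real.sin x) + Real.log (Real.cos x)))
      = ∫ x in (0:ℝ)..(π/2), (Real.log (Real.sin (2*x)) - Real.log 2) := by
    apply intervalIntegral.integral_congr_ae
    have hne : ∀ᵐ x : ℝ, x ≠ π/2 := by
      refine MeasureTheory.ae_iff.mpr ?_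
      simpa using Real.volume_singleton (a := π/2)
    filter_upwards [hne] with x hx hmem
    rw [Set.uIoc_of_le (by positivity : (0:ℝ) ≤ π/2)] at hmem
    have hx1 : 0 < x := hmem.1
    have hx2 : x < π/2 := lt_of_le_of_ne hmem.2 hx
    have hs : 0 < Real.sin x := Real.sin_pos_of_pos_of_lt_pi hx1 (by linarith [Real.pi_pos])
    have hc : 0 < Real.cos x := Real.cos_pos_of_mem_Ioo ⟨by linarith [Real.pi_pos], hx2⟩
    rw [Real.sin_two_mul, Real.log_mul (by positivity) hc.ne',
      Real.log_mul two_ne_zero hs.ne']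
    ring
  rw [hcongr, intervalIntegral.integral_sub hint2 intervalIntegrable_const,
    hdouble, intervalIntegral.integral_const, smul_eq_mul] at hsum
  have hπ := Real.pi_pos
  linarith

lemma intervalIntegrable_log_cos' : IntervalIntegrable (fun x => Real.log (Real.cos x)) volume (-(π/2)) (π/2) := by
  apply IntervalIntegrable.trans (b := 0)
  · have h := (IntervalIntegrable.iff_comp_neg enorm_ne_top).mp intervalIntegrable_log_cos₀
    simpa [Real.cos_neg] using h.symm
  · exact intervalIntegrable_log_cos₀

lemma integral_log_cos_symm : (∫ x in (-(π/2))..(π/2), Real.log (Real.cos x)) = -π * Real.log 2 := by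
  rw [← intervalIntegral.integral_add_adjacent_intervals (b := 0)
    (intervalIntegrable_log_cos'.mono_set (by rw [Set.uIcc_of_le, Set.uIcc_of_le] <;> [exact Set.Icc_subset_Icc le_rfl (by positivity); linarith [Real.pi_pos]; linarith [Real.pi_pos]]))
    intervalIntegrable_log_cos₀]
  have h1 : (∫ x in (-(π/2):ℝ)..0, Real.log (Real.cos x)) = ∫ x in (0:ℝ)..(π/2), Real.log (Real.cos x) := by
    have h := intervalIntegral.integral_comp_neg (a := 0) (b := π/2) (fun y => Real.log (Real.cos y))
    simp only [Real.cos_neg, neg_zero] at h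
    exact h.symm
  rw [h1, integral_log_cos_eq, integral_log_sin_pi_div_two]
  ring

lemma cauchy_aux : ∀ θ ∈ Set.Ioo (-(π/2)) (π/2),
    |1 / Real.cos θ ^ 2| • ((1 / (π * (1 + Real.tan θ ^ 2))) * Real.log (1 + Real.tan θ ^ 2))
      = -(2/π) * Real.log (Real.cos θ) := by
  intro θ hθ
  have hc : 0 < Real.cos θ := Real.cos_pos_of_mem_Ioo hθ
  have htan : (1 + Real.tan θ ^ 2)⁻¹ = Real.cos θ ^ 2 := Real.inv_one_add_tan_sq hc.ne'
  have htan' : 1 + Real.tan θ ^ 2 = 1 / Real.cos θ ^ 2 := by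
    rw [← htan]; field_simp
  rw [smul_eq_mul, htan', abs_of_pos (by positivity)]
  rw [Real.log_div one_ne_zero (by positivity), Real.log_one, Real.log_pow]
  have hπ := Real.pi_pos
  field_simp
  ring

lemma hasDeriv_tan_Ioo : ∀ x ∈ Set.Ioo (-(π/2)) (π/2),
    HasDerivWithinAt Real.tan (1 / Real.cos x ^ 2) (Set.Ioo (-(π/2)) (π/2)) x := by
  intro x hx
  exact (Real.hasDerivAt_tan (Real.cos_pos_of_mem_Ioo hx).ne').hasDerivWithinAt

lemma integral_cauchy_log : (∫ x : ℝ, (1 / (π * (1 + x ^ 2))) * Real.log (1 + x ^ 2)) = Real.log 4 := by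
  have hπ := Real.pi_pos
  have key := integral_image_eq_integral_abs_deriv_smul (s := Set.Ioo (-(π/2)) (π/2))
    measurableSet_Ioo hasDeriv_tan_Ioo Real.injOn_tan
    (fun x => (1 / (π * (1 + x ^ 2))) * Real.log (1 + x ^ 2))
  rw [Real.image_tan_Ioo] at key
  rw [← MeasureTheory.setIntegral_univ, key,
    MeasureTheory.setIntegral_congr_fun measurableSet_Ioo cauchy_aux]
  rw [← MeasureTheory.integral_Ioc_eq_integral_Ioo,
    ← intervalIntegral.integral_of_le (by linarith : -(π/2) ≤ π/2)]
  rw [intervalIntegral.integral_const_mul, integral_log_cos_symm]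
  rw [show (4:ℝ) = 2^2 by norm_num, Real.log_pow]
  field_simp
  ring

lemma integrable_cauchy_log : Integrable (fun x : ℝ => (1 / (π * (1 + x ^ 2))) * Real.log (1 + x ^ 2)) := by
  have hπ := Real.pi_pos
  rw [← MeasureTheory.integrableOn_univ, ← Real.image_tan_Ioo]
  rw [integrableOn_image_iff_integrableOn_abs_deriv_smul measurableSet_Ioo hasDeriv_tan_Ioo Real.injOn_tan]
  apply MeasureTheory.IntegrableOn.congr_fun (f := fun θ => -(2/π) * Real.log (Real.cos θ))
  · have := intervalIntegrable_log_cos'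
    rw [intervalIntegrable_iff_integrableOn_Ioc_of_le (by linarith : -(π/2) ≤ π/2)] at this
    exact IntegrableOn.mono_set (this.const_mul _) Set.Ioo_subset_Ioc_self
  · intro θ hθ; exact (cauchy_aux θ hθ).symm
  · exact measurableSet_Ioo

section scaled
variable {γ : ℝ} (hγ : 0 < γ)

lemma cauchy_pointwise_scale (hγ : 0 < γ) (x : ℝ) :
    γ / (π * (γ ^ 2 + x ^ 2)) * Real.log (1 + x ^ 2 / γ ^ 2)
      = (1/γ) * ((1 / (π * (1 + (x/γ) ^ 2))) * Real.log (1 + (x/γ) ^ 2)) := by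
  have hπ := Real.pi_pos
  have hc : (1/γ) * (1 / (π * (1 + x^2/γ^2))) = γ / (π * (γ^2 + x^2)) := by
    have hne : γ^2 + x^2 ≠ 0 := by positivity
    field_simp
  rw [div_pow, ← hc]
  ring

lemma integral_cauchy_scaled (hγ : 0 < γ) :
    (∫ x : ℝ, γ / (π * (γ ^ 2 + x ^ 2)) * Real.log (1 + x ^ 2 / γ ^ 2)) = Real.log 4 := by
  simp_rw [cauchy_pointwise_scale hγ]
  rw [MeasureTheory.integral_const_mul, MeasureTheory.Measure.integral_comp_div
    (fun u => (1 / (π * (1 + u ^ 2))) * Real.log (1 + u ^ 2)) γ,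
    integral_cauchy_log, smul_eq_mul, abs_of_pos hγ]
  field_simp

lemma integrable_cauchy_scaled (hγ : 0 < γ) :
    Integrable (fun x : ℝ => γ / (π * (γ ^ 2 + x ^ 2)) * Real.log (1 + x ^ 2 / γ ^ 2)) := by
  have h := (integrable_cauchy_log.comp_div hγ.ne').const_mul (1/γ)
  apply h.congr
  filter_upwards with x
  exact (cauchy_pointwise_scale hγ x).symm

lemma cauchy_dens_pointwise (hγ : 0 < γ) (x : ℝ) :
    γ / (π * (γ ^ 2 + x ^ 2)) = (1/(π*γ)) * (1 + (x/γ) ^ 2)⁻¹ := by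
  have hπ := Real.pi_pos
  rw [div_pow]
  field_simp

lemma integrable_cauchy_dens (hγ : 0 < γ) :
    Integrable (fun x : ℝ => γ / (π * (γ ^ 2 + x ^ 2))) := by
  have h := (integrable_inv_one_add_sq.comp_div hγ.ne').const_mul (1/(π*γ))
  apply h.congr
  filter_upwards with x
  exact (cauchy_dens_pointwise hγ x).symm

lemma integral_cauchy_dens (hγ : 0 < γ) :
    (∫ x : ℝ, γ / (π * (γ ^ 2 + x ^ 2))) = 1 := by
  have hπ := Real.pi_pos
  simp_rw [cauchy_dens_pointwise hγ]
  rw [MeasureTheory.integral_const_mul,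
    MeasureTheory.Measure.integral_comp_div (fun u => (1 + u ^ 2)⁻¹) γ,
    integral_univ_inv_one_add_sq, smul_eq_mul, abs_of_pos hγ]
  field_simp

end scaled

section law
variable {γ : ℝ}

lemma cauchy_dens_cont (hγ : 0 < γ) : Continuous (fun x : ℝ => γ / (π * (γ ^ 2 + x ^ 2))) := by
  have hπ := Real.pi_pos
  exact continuous_const.div (by continuity) (fun x => by positivity)

lemma cauchy_dens_meas (hγ : 0 < γ) :
    Measurable (fun x : ℝ => Real.toNNReal (γ / (π * (γ ^ 2 + x ^ 2)))) :=
  (measurable_real_toNNReal).comp (cauchy_dens_cont hγ).measurable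

lemma cauchyLaw_integral (hγ : 0 < γ) (g : ℝ → ℝ) :
    (∫ y, g y ∂(cauchyLaw γ)) = ∫ x, (γ / (π * (γ ^ 2 + x ^ 2))) * g x := by
  have hπ := Real.pi_pos
  rw [cauchyLaw]
  have : (fun x : ℝ => ENNReal.ofReal (γ / (π * (γ ^ 2 + x ^ 2))))
      = fun x : ℝ => ((Real.toNNReal (γ / (π * (γ ^ 2 + x ^ 2))) : ℝ≥0) : ℝ≥0∞) := rfl
  rw [this, integral_withDensity_eq_integral_smul (cauchy_dens_meas hγ) g]
  congr 1
  funext x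
  rw [NNReal.smul_def, smul_eq_mul, Real.coe_toNNReal _ (by positivity)]

lemma cauchyLaw_expect (hγ : 0 < γ) :
    (∫ y, Real.log (1 + y ^ 2 / γ ^ 2) ∂(cauchyLaw γ)) = Real.log 4 := by
  rw [cauchyLaw_integral hγ, integral_cauchy_scaled hγ]

lemma cauchyLaw_expect_lt (hγ : 0 < γ) {s : ℝ} (hs : 0 < s) (hsγ : s < γ) :
    Real.log 4 < ∫ y, Real.log (1 + y ^ 2 / s ^ 2) ∂(cauchyLaw γ) := by
  have hπ := Real.pi_pos
  set d : ℝ → ℝ := fun x => γ / (π * (γ ^ 2 + x ^ 2)) with hd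
  set g : ℝ → ℝ := fun x => Real.log (1 + x ^ 2 / s ^ 2) - Real.log (1 + x ^ 2 / γ ^ 2) with hg
  have hg_nonneg : ∀ x, 0 ≤ g x := by
    intro x
    apply sub_nonneg.mpr
    apply Real.log_le_log (by positivity)
    have : x^2 / γ^2 ≤ x^2 / s^2 :=
      div_le_div_of_nonneg_left (by positivity) (by positivity) (by nlinarith)
    linarith
  have hg_bdd : ∀ x, ‖g x‖ ≤ Real.log (γ^2/s^2) := by
    intro x
    rw [Real.norm_eq_abs, abs_of_nonneg (hg_nonneg x)]
    have h1 : 1 + x^2/s^2 ≤ (γ^2/s^2) * (1 + x^2/γ^2) := by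
      have : (γ^2/s^2) * (1 + x^2/γ^2) = γ^2/s^2 + x^2/s^2 := by field_simp
      rw [this]
      have : (1:ℝ) ≤ γ^2/s^2 := (one_le_div (by positivity)).mpr (by nlinarith)
      linarith
    have h2 : Real.log (1 + x^2/s^2) ≤ Real.log (γ^2/s^2) + Real.log (1 + x^2/γ^2) := by
      rw [← Real.log_mul (by positivity) (by positivity)]
      exact Real.log_le_log (by positivity) h1
    simp only [hg]; linarith
  have hg_cont : Continuous g := by
    apply Continuous.sub
    · exact (by continuity : Continuous fun x : ℝ => 1 + x^2/s^2).log
        (fun x => by positivity)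
    · exact (by continuity : Continuous fun x : ℝ => 1 + x^2/γ^2).log
        (fun x => by positivity)
  have hdg_int : Integrable (fun x => d x * g x) := by
    have h := (integrable_cauchy_dens hγ).bdd_mul hg_cont.aestronglyMeasurable
      (Filter.Eventually.of_forall hg_bdd)
    simpa [mul_comm] using h
  have hdg_pos : 0 < ∫ x, d x * g x := by
    rw [MeasureTheory.integral_pos_iff_support_of_nonneg
      (fun x => mul_nonneg (by positivity) (hg_nonneg x)) hdg_int]
    have hsub : Set.Ioo (0:ℝ) 1 ⊆ Function.support fun x => d x * g x := by
      intro x hx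
      have hx0 : x ≠ 0 := ne_of_gt hx.1
      have hgx : 0 < g x := by
        apply sub_pos.mpr
        apply Real.log_lt_log (by positivity)
        have hx2 : 0 < x^2 := by positivity
        have : x^2 / γ^2 < x^2 / s^2 := by
          apply div_lt_div_of_pos_left hx2 (by positivity) (by nlinarith)
        linarith
      have : 0 < d x * g x := mul_pos (by positivity) hgx
      exact ne_of_gt this
    calc (0:ℝ≥0∞) < volume (Set.Ioo (0:ℝ) 1) := by rw [Real.volume_Ioo]; norm_num
      _ ≤ volume (Function.support fun x => d x * g x) := measure_mono hsub
  rw [cauchyLaw_integral hγ]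
  have hsplit : (fun x => d x * Real.log (1 + x ^ 2 / s ^ 2))
      = fun x => d x * Real.log (1 + x ^ 2 / γ ^ 2) + d x * g x := by
    funext x; simp only [hg]; ring
  show Real.log 4 < ∫ x, d x * Real.log (1 + x ^ 2 / s ^ 2)
  rw [hsplit, MeasureTheory.integral_add (integrable_cauchy_scaled hγ) hdg_int,
    integral_cauchy_scaled hγ]
  linarith

lemma cbStrength_cauchyLaw (hγ : 0 < γ) : cbStrength (cauchyLaw γ) = γ := by
  set S := {s : ℝ | 0 < s ∧ (∫ y, Real.log (1 + y ^ 2 / s ^ 2) ∂(cauchyLaw γ)) ≤ Real.log 4} with hS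
  have hmem : γ ∈ S := ⟨hγ, le_of_eq (cauchyLaw_expect hγ)⟩
  have hlb : ∀ s ∈ S, γ ≤ s := by
    intro s hs
    by_contra h
    push_neg at h
    exact absurd hs.2 (not_le.mpr (cauchyLaw_expect_lt hγ hs.1 h))
  exact le_antisymm (csInf_le ⟨γ, hlb⟩ hmem) (le_csInf ⟨γ, hmem⟩ hlb)

lemma cauchy_entropy (hγ : 0 < γ) :
    (-∫ x : ℝ, (γ / (π * (γ ^ 2 + x ^ 2))) * Real.log (γ / (π * (γ ^ 2 + x ^ 2))))
      = Real.log (4 * π * γ) := by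
  have hπ := Real.pi_pos
  have hpt : ∀ x : ℝ, (γ / (π * (γ ^ 2 + x ^ 2))) * Real.log (γ / (π * (γ ^ 2 + x ^ 2)))
      = -(Real.log (π * γ) * (γ / (π * (γ ^ 2 + x ^ 2)))
          + (γ / (π * (γ ^ 2 + x ^ 2))) * Real.log (1 + x ^ 2 / γ ^ 2)) := by
    intro x
    have hpos : (0:ℝ) < γ ^ 2 + x ^ 2 := by positivity
    have hlog : Real.log (γ / (π * (γ ^ 2 + x ^ 2)))
        = -(Real.log (π * γ) + Real.log (1 + x ^ 2 / γ ^ 2)) := by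
      rw [Real.log_div hγ.ne' (by positivity), Real.log_mul hπ.ne' hpos.ne',
        Real.log_mul hπ.ne' hγ.ne']
      have h2 : γ ^ 2 + x ^ 2 = γ ^ 2 * (1 + x ^ 2 / γ ^ 2) := by field_simp
      rw [h2, Real.log_mul (by positivity) (by positivity), Real.log_pow]
      push_cast
      ring
    rw [hlog]; ring
  simp_rw [hpt]
  rw [MeasureTheory.integral_neg, neg_neg,
    MeasureTheory.integral_add (((integrable_cauchy_dens hγ).const_mul _)) (integrable_cauchy_scaled hγ),
    MeasureTheory.integral_const_mul, integral_cauchy_dens hγ, integral_cauchy_scaled hγ]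
  have h4 : Real.log (4 * π * γ) = Real.log 4 + Real.log π + Real.log γ := by
    rw [Real.log_mul (by positivity) hγ.ne', Real.log_mul (by norm_num) hπ.ne']
  have hπγ : Real.log (π * γ) = Real.log π + Real.log γ := Real.log_mul hπ.ne' hγ.ne'
  rw [h4, hπγ]
  ring

end law


/-- For a Cauchy variable `X` of scale `γ`: `E[ln(1 + X²/γ²)] = ln 4`, equivalently
`∫ ln(1 + x²)/(π(1 + x²)) dx = ln 4`; consequently the CB-strength of `X` is `γ` and
the differential entropy of `X` is `ln(4πγ)`. -/
theorem cauchy_strength_and_entropy (γ : ℝ) (hγ : 0 < γ) :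
    (∫ x : ℝ, (γ / (π * (γ ^ 2 + x ^ 2))) * Real.log (1 + x ^ 2 / γ ^ 2)) = Real.log 4 ∧
    (∫ x : ℝ, (1 / (π * (1 + x ^ 2))) * Real.log (1 + x ^ 2)) = Real.log 4 ∧
    cbStrength (cauchyLaw γ) = γ ∧
    (-∫ x : ℝ, (γ / (π * (γ ^ 2 + x ^ 2))) * Real.log (γ / (π * (γ ^ 2 + x ^ 2))))
      = Real.log (4 * π * γ) :=
  ⟨integral_cauchy_scaled hγ, integral_cauchy_log, cbStrength_cauchyLaw hγ, cauchy_entropy hγ⟩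
end

section
/- Let d ≥ 1 and let Z be an ℝ^d-valued random vector with the standard isotropic (circular) Cauchy density f(x) = Γ((d+1)/2) · π^{-(d+1)/2} · (1 + ‖x‖²)^{-(d+1)/2}. Then E[ln(1 + ‖Z‖²)] = ln 4 + ψ((d+1)/2) + γ_e, where ψ(t) = Γ'(t)/Γ(t) is the digamma function and γ_e is the Euler–Mascheroni constant; i.e., ∫_{ℝ^d} Γ((d+1)/2) π^{-(d+1)/2} (1 + ‖x‖²)^{-(d+1)/2} ln(1 + ‖x‖²) dx = ln 4 + Γ'((d+1)/2)/Γ((d+1)/2) + γ_e. -/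
open MeasureTheory Real
open Set

lemma betaReal_integrableOn {u v : ℝ} (hu : 0 < u) (hv : 0 < v) :
    IntegrableOn (fun x : ℝ => x ^ (u - 1) * (1 - x) ^ (v - 1)) (Ioo 0 1) := by
  have hc : IntervalIntegrable
      (fun x : ℝ => (x : ℂ) ^ ((u : ℂ) - 1) * ((1 : ℂ) - x) ^ ((v : ℂ) - 1)) volume 0 1 :=
    Complex.betaIntegral_convergent (by simpa using hu) (by simpa using hv)
  have hIoc : IntegrableOn
      (fun x : ℝ => (x : ℂ) ^ ((u : ℂ) - 1) * ((1 : ℂ) - x) ^ ((v : ℂ) - 1)) (Ioc 0 1) := by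
    rw [← intervalIntegrable_iff_integrableOn_Ioc_of_le zero_le_one]
    exact hc
  have hre : IntegrableOn
      (fun x : ℝ => ((x : ℂ) ^ ((u : ℂ) - 1) * ((1 : ℂ) - x) ^ ((v : ℂ) - 1)).re)
      (Ioc 0 1) := hIoc.re
  refine (hre.congr_fun ?_ measurableSet_Ioc).mono_set Ioo_subset_Ioc_self
  intro x hx
  have hx0 : (0:ℝ) ≤ x := le_of_lt hx.1
  have hx1 : (0:ℝ) ≤ 1 - x := by linarith [hx.2]
  have h1 : ((x : ℂ) ^ ((u : ℂ) - 1)) = ((x ^ (u - 1) : ℝ) : ℂ) := by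
    rw [Complex.ofReal_cpow hx0]; push_cast; ring_nf
  have h2 : (((1 : ℂ) - x) ^ ((v : ℂ) - 1)) = (((1 - x) ^ (v - 1) : ℝ) : ℂ) := by
    rw [show ((1:ℂ) - x) = ((1 - x : ℝ) : ℂ) by push_cast; ring,
      Complex.ofReal_cpow hx1]
    push_cast; ring_nf
  simp [h1, h2, ← Complex.ofReal_mul]

lemma betaReal_eq {u v : ℝ} (hu : 0 < u) (hv : 0 < v) :
    ∫ x in Ioo (0:ℝ) 1, x ^ (u - 1) * (1 - x) ^ (v - 1)
      = Real.Gamma u * Real.Gamma v / Real.Gamma (u + v) := by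
  have key := Complex.Gamma_mul_Gamma_eq_betaIntegral
    (s := (u:ℂ)) (t := (v:ℂ)) (by simpa using hu) (by simpa using hv)
  have hbeta : Complex.betaIntegral (u:ℂ) (v:ℂ)
      = ((∫ x in (0:ℝ)..1, x ^ (u - 1) * (1 - x) ^ (v - 1) : ℝ) : ℂ) := by
    rw [Complex.betaIntegral, ← intervalIntegral.integral_ofReal]
    refine intervalIntegral.integral_congr fun x hx => ?_
    rw [uIcc_of_le zero_le_one] at hx
    have hx0 : (0:ℝ) ≤ x := hx.1
    have hx1 : (0:ℝ) ≤ 1 - x := by linarith [hx.2]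
    have h1 : ((x : ℂ) ^ ((u : ℂ) - 1)) = ((x ^ (u - 1) : ℝ) : ℂ) := by
      rw [Complex.ofReal_cpow hx0]; push_cast; ring_nf
    have h2 : (((1 : ℂ) - x) ^ ((v : ℂ) - 1)) = (((1 - x) ^ (v - 1) : ℝ) : ℂ) := by
      rw [show ((1:ℂ) - x) = ((1 - x : ℝ) : ℂ) by push_cast; ring,
        Complex.ofReal_cpow hx1]
      push_cast; ring_nf
    simp [h1, h2, ← Complex.ofReal_mul]
  rw [hbeta] at key
  have hG : Real.Gamma u * Real.Gamma v
      = Real.Gamma (u + v) * ∫ x in (0:ℝ)..1, x ^ (u - 1) * (1 - x) ^ (v - 1) := by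
    have := key
    rw [show ((u:ℂ) + v) = ((u + v : ℝ) : ℂ) by push_cast; ring] at this
    rw [Complex.Gamma_ofReal, Complex.Gamma_ofReal, Complex.Gamma_ofReal] at this
    exact_mod_cast this
  have hGne : Real.Gamma (u + v) ≠ 0 := (Real.Gamma_pos_of_pos (by linarith)).ne'
  rw [intervalIntegral.integral_of_le zero_le_one, integral_Ioc_eq_integral_Ioo] at hG
  field_simp [hGne] at hG ⊢
  linarith [hG]


lemma neg_log_le_rpow {x c : ℝ} (hx : 0 < x) (hc : 0 < c) :
    -Real.log x ≤ x ^ (-c) / c := by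
  calc -Real.log x = Real.log x⁻¹ := (Real.log_inv x).symm
    _ ≤ (x⁻¹) ^ c / c := Real.log_le_rpow_div (inv_pos.mpr hx).le hc
    _ = x ^ (-c) / c := by rw [← Real.rpow_neg_one, ← Real.rpow_mul hx.le]; ring_nf

lemma hasDerivAt_betaReal {v : ℝ} (hv : 0 < v) {u₀ : ℝ} (hu : 0 < u₀) :
    HasDerivAt (fun u => ∫ x in Ioo (0:ℝ) 1, x ^ (u - 1) * (1 - x) ^ (v - 1))
      (∫ x in Ioo (0:ℝ) 1, Real.log x * (x ^ (u₀ - 1) * (1 - x) ^ (v - 1))) u₀ := by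
  have hmeas : ∀ u : ℝ, AEStronglyMeasurable (fun x : ℝ => x ^ (u - 1) * (1 - x) ^ (v - 1))
      (volume.restrict (Ioo 0 1)) := by
    intro u
    refine ContinuousOn.aestronglyMeasurable ?_ measurableSet_Ioo
    refine ContinuousOn.mul ?_ ?_
    · exact continuousOn_id.rpow_const fun x hx => Or.inl (ne_of_gt hx.1)
    · exact (continuousOn_const.sub continuousOn_id).rpow_const
        fun x hx => Or.inl (sub_ne_zero.mpr (ne_of_gt hx.2))
  have hlogmeas : AEStronglyMeasurable
      (fun x : ℝ => Real.log x * (x ^ (u₀ - 1) * (1 - x) ^ (v - 1)))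
      (volume.restrict (Ioo 0 1)) := by
    refine ContinuousOn.aestronglyMeasurable ?_ measurableSet_Ioo
    refine ContinuousOn.mul (ContinuousOn.log continuousOn_id
      fun x hx => ne_of_gt hx.1) ?_
    refine ContinuousOn.mul ?_ ?_
    · exact continuousOn_id.rpow_const fun x hx => Or.inl (ne_of_gt hx.1)
    · exact (continuousOn_const.sub continuousOn_id).rpow_const
        fun x hx => Or.inl (sub_ne_zero.mpr (ne_of_gt hx.2))
  have hε : (0:ℝ) < u₀ / 2 := by linarith
  have key := hasDerivAt_integral_of_dominated_loc_of_deriv_le (μ := volume.restrict (Ioo 0 1))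
    (F := fun u x => x ^ (u - 1) * (1 - x) ^ (v - 1))
    (F' := fun u x => Real.log x * (x ^ (u - 1) * (1 - x) ^ (v - 1)))
    (x₀ := u₀)
    (bound := fun x => (4 / u₀) * (x ^ (u₀ / 4 - 1) * (1 - x) ^ (v - 1)))
    (Metric.ball_mem_nhds u₀ hε) (Filter.Eventually.of_forall hmeas)
    (betaReal_integrableOn hu hv) hlogmeas ?_ ?_ ?_
  · exact key.2
  · -- bound
    filter_upwards [ae_restrict_mem measurableSet_Ioo] with x hx u hball
    have hx0 : (0:ℝ) < x := hx.1
    have hx1 : x < 1 := hx.2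
    have h1x : (0:ℝ) < 1 - x := by linarith
    have hu2 : u₀ / 2 - 1 ≤ u - 1 := by
      have := Metric.mem_ball.mp hball
      rw [Real.dist_eq, abs_sub_lt_iff] at this
      linarith [this.2]
    have hple : x ^ (u - 1) ≤ x ^ (u₀ / 2 - 1) :=
      Real.rpow_le_rpow_of_exponent_ge hx0 hx1.le hu2
    have hlog : -Real.log x ≤ (4 / u₀) * x ^ (-(u₀ / 4)) := by
      have := neg_log_le_rpow hx0 (by linarith : (0:ℝ) < u₀ / 4)
      calc -Real.log x ≤ x ^ (-(u₀/4)) / (u₀/4) := this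
        _ = (4 / u₀) * x ^ (-(u₀ / 4)) := by field_simp
    have hlogx_neg : Real.log x ≤ 0 := Real.log_nonpos hx0.le hx1.le
    have hnorm : ‖Real.log x * (x ^ (u - 1) * (1 - x) ^ (v - 1))‖
        = (-Real.log x) * (x ^ (u - 1) * (1 - x) ^ (v - 1)) := by
      rw [norm_mul, Real.norm_eq_abs, abs_of_nonpos hlogx_neg, Real.norm_eq_abs,
        abs_of_nonneg (by positivity)]
    rw [hnorm]
    have hpos1 : (0:ℝ) ≤ (1 - x) ^ (v - 1) := by positivity
    have hstep : (-Real.log x) * (x ^ (u - 1) * (1 - x) ^ (v - 1))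
        ≤ ((4 / u₀) * x ^ (-(u₀ / 4))) * (x ^ (u₀ / 2 - 1) * (1 - x) ^ (v - 1)) := by
      have hA : (0:ℝ) ≤ -Real.log x := by linarith
      have h1 : (-Real.log x) * (x ^ (u - 1) * (1 - x) ^ (v - 1))
          ≤ (-Real.log x) * (x ^ (u₀ / 2 - 1) * (1 - x) ^ (v - 1)) := by
        apply mul_le_mul_of_nonneg_left _ hA
        exact mul_le_mul_of_nonneg_right hple hpos1
      refine h1.trans ?_
      apply mul_le_mul_of_nonneg_right hlog (by positivity)
    refine hstep.trans (le_of_eq ?_)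
    rw [show x ^ (u₀ / 4 - 1) = x ^ (-(u₀ / 4)) * x ^ (u₀ / 2 - 1) by
      rw [← Real.rpow_add hx0]; ring_nf]
    ring
  · -- bound integrable
    exact ((betaReal_integrableOn (by linarith : (0:ℝ) < u₀ / 4) hv).const_mul _)
  · -- differentiability
    filter_upwards [ae_restrict_mem measurableSet_Ioo] with x hx u _
    have hx0 : (0:ℝ) < x := hx.1
    have h1 : HasDerivAt (fun y : ℝ => x ^ y) (x ^ (u - 1) * Real.log x) (u - 1) :=
      (Real.hasStrictDerivAt_const_rpow hx0 (u - 1)).hasDerivAt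
    have h2 : HasDerivAt (fun u : ℝ => u - 1) 1 u := (hasDerivAt_id u).sub_const 1
    have h3 : HasDerivAt (fun u : ℝ => x ^ (u - 1)) (x ^ (u - 1) * Real.log x * 1) u :=
      HasDerivAt.comp u h1 h2
    have h4 := h3.mul_const ((1 - x) ^ (v - 1))
    refine h4.congr_deriv ?_
    ring

lemma betaReal_log_eq {v : ℝ} (hv : 0 < v) {u₀ : ℝ} (hu : 0 < u₀) :
    ∫ x in Ioo (0:ℝ) 1, Real.log x * (x ^ (u₀ - 1) * (1 - x) ^ (v - 1))
      = (deriv Real.Gamma u₀ * Real.Gamma (u₀ + v)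
          - Real.Gamma u₀ * deriv Real.Gamma (u₀ + v)) * Real.Gamma v
          / (Real.Gamma (u₀ + v)) ^ 2 := by
  have hGpos : ∀ {t : ℝ}, 0 < t → ∀ m : ℕ, t ≠ -(m:ℝ) := by
    intro t ht m
    have : (0:ℝ) ≤ m := Nat.cast_nonneg m
    intro h; rw [h] at ht; linarith
  have hd1 : HasDerivAt Real.Gamma (deriv Real.Gamma u₀) u₀ :=
    (Real.differentiableAt_Gamma (hGpos hu)).hasDerivAt
  have hd2 : HasDerivAt (fun u => Real.Gamma (u + v)) (deriv Real.Gamma (u₀ + v)) u₀ := by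
    have h := ((Real.differentiableAt_Gamma (hGpos (by linarith : (0:ℝ) < u₀ + v))).hasDerivAt).comp
      u₀ ((hasDerivAt_id u₀).add_const v)
    simpa [Function.comp_def] using h
  have hGne : Real.Gamma (u₀ + v) ≠ 0 := (Real.Gamma_pos_of_pos (by linarith)).ne'
  have hg : HasDerivAt (fun u => Real.Gamma u * Real.Gamma v / Real.Gamma (u + v))
      ((deriv Real.Gamma u₀ * Real.Gamma v * Real.Gamma (u₀ + v)
        - Real.Gamma u₀ * Real.Gamma v * deriv Real.Gamma (u₀ + v))
        / (Real.Gamma (u₀ + v)) ^ 2) u₀ :=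
    (hd1.mul_const (Real.Gamma v)).div hd2 hGne
  have hev : (fun u => ∫ x in Ioo (0:ℝ) 1, x ^ (u - 1) * (1 - x) ^ (v - 1))
      =ᶠ[nhds u₀] fun u => Real.Gamma u * Real.Gamma v / Real.Gamma (u + v) := by
    filter_upwards [isOpen_Ioi.mem_nhds (mem_Ioi.mpr hu)] with u hu'
    exact betaReal_eq hu' hv
  have hg' : HasDerivAt (fun u => ∫ x in Ioo (0:ℝ) 1, x ^ (u - 1) * (1 - x) ^ (v - 1))
      ((deriv Real.Gamma u₀ * Real.Gamma v * Real.Gamma (u₀ + v)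
        - Real.Gamma u₀ * Real.Gamma v * deriv Real.Gamma (u₀ + v))
        / (Real.Gamma (u₀ + v)) ^ 2) u₀ := hg.congr_of_eventuallyEq hev
  have := (hasDerivAt_betaReal hv hu).unique hg'
  rw [this]; ring

lemma cauchy_subst (d : ℕ) (hd : 1 ≤ d) :
    ∫ x in Ioo (0:ℝ) 1, Real.log x * (x ^ ((1:ℝ)/2 - 1) * (1 - x) ^ ((d:ℝ)/2 - 1))
      = -2 * ∫ r in Ioi (0:ℝ),
          r ^ (d - 1) * (1 + r ^ 2) ^ (-(((d:ℝ) + 1) / 2)) * Real.log (1 + r ^ 2) := by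
  set g : ℝ → ℝ := fun x => Real.log x * (x ^ ((1:ℝ)/2 - 1) * (1 - x) ^ ((d:ℝ)/2 - 1)) with hg
  set f : ℝ → ℝ := fun r => (1 + r ^ 2)⁻¹ with hf
  set f' : ℝ → ℝ := fun r => -(2 * r) / (1 + r ^ 2) ^ 2 with hf'
  have hP : ∀ r : ℝ, (0:ℝ) < 1 + r ^ 2 := fun r => by positivity
  have himg : f '' Ioi 0 = Ioo 0 1 := by
    apply Subset.antisymm
    · rintro y ⟨r, hr, rfl⟩
      have hr0 : (0:ℝ) < r := hr
      constructor
      · exact inv_pos.mpr (hP r)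
      · rw [inv_lt_one_iff₀]; right; nlinarith
    · rintro y ⟨hy0, hy1⟩
      refine ⟨Real.sqrt (y⁻¹ - 1), ?_, ?_⟩
      · have : (1:ℝ) < y⁻¹ := (one_lt_inv_iff₀).mpr ⟨hy0, hy1⟩
        exact Real.sqrt_pos.mpr (by linarith)
      · have h1 : (1:ℝ) < y⁻¹ := (one_lt_inv_iff₀).mpr ⟨hy0, hy1⟩
        simp only [hf]
        rw [Real.sq_sqrt (by linarith)]
        field_simp
        ring
  have hderiv : ∀ r ∈ Ioi (0:ℝ), HasDerivWithinAt f (f' r) (Ioi 0) r := by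
    intro r hr
    have h1 : HasDerivAt (fun r : ℝ => 1 + r ^ 2) (2 * r) r := by
      simpa using ((hasDerivAt_pow 2 r).const_add 1)
    have h2 := h1.inv (ne_of_gt (hP r))
    have : -(2 * r) / (1 + r ^ 2) ^ 2 = f' r := rfl
    exact (h2.congr_deriv (by rw [hf'])).hasDerivWithinAt
  have hinj : InjOn f (Ioi 0) := by
    have : StrictAntiOn f (Ioi 0) := by
      intro a ha b hb hab
      simp only [hf]
      apply inv_strictAnti₀ (hP a)
      nlinarith [mem_Ioi.mp ha, mem_Ioi.mp hb]
    exact this.injOn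
  have key := integral_image_eq_integral_abs_deriv_smul measurableSet_Ioi hderiv hinj g
  rw [himg] at key
  rw [key]
  rw [← MeasureTheory.integral_const_mul]
  apply setIntegral_congr_fun measurableSet_Ioi
  intro r hr
  have hr0 : (0:ℝ) < r := hr
  have hP0 : (0:ℝ) < 1 + r ^ 2 := hP r
  have habs : |f' r| = 2 * r / (1 + r ^ 2) ^ 2 := by
    rw [hf', abs_div, abs_neg, abs_of_nonneg (by positivity : (0:ℝ) ≤ 2 * r),
      abs_of_nonneg (by positivity : (0:ℝ) ≤ ((1 + r^2)^2 : ℝ))]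
  have hfr : f r = (1 + r ^ 2)⁻¹ := rfl
  have hlog : Real.log ((1 + r ^ 2)⁻¹) = -Real.log (1 + r ^ 2) := Real.log_inv _
  have hpow1 : ((1 + r ^ 2)⁻¹) ^ ((1:ℝ)/2 - 1) = (1 + r ^ 2) ^ (-((1:ℝ)/2 - 1)) := by
    rw [Real.inv_rpow hP0.le, ← Real.rpow_neg hP0.le]
  have h1sub : 1 - (1 + r ^ 2)⁻¹ = r ^ 2 / (1 + r ^ 2) := by field_simp; ring
  have hpow2 : (r ^ 2 / (1 + r ^ 2)) ^ ((d:ℝ)/2 - 1)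
      = r ^ ((d:ℝ) - 2) * (1 + r ^ 2) ^ (-((d:ℝ)/2 - 1)) := by
    rw [Real.div_rpow (by positivity) hP0.le, Real.rpow_neg hP0.le, div_eq_mul_inv]
    congr 1
    rw [← Real.rpow_natCast r 2, ← Real.rpow_mul hr0.le]
    ring_nf
  have hnpow : (r : ℝ) ^ (d - 1) = r ^ ((d:ℝ) - 1) := by
    rw [← Real.rpow_natCast r (d - 1)]
    congr 1
    have : (1:ℕ) ≤ d := hd
    push_cast [Nat.cast_sub this]
    ring
  have habs2 : |(-(2 * r) / (1 + r ^ 2) ^ 2)| = 2 * r / (1 + r ^ 2) ^ 2 := by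
    rw [abs_div, abs_neg, abs_of_nonneg (by positivity : (0:ℝ) ≤ 2 * r),
      abs_of_nonneg (by positivity : (0:ℝ) ≤ ((1 + r^2)^2 : ℝ))]
  simp only [hg, hf, hf', smul_eq_mul]
  rw [habs2, hlog, hpow1, h1sub, hpow2, hnpow]
  have hPexp : (1 + r ^ 2) ^ (-(((d:ℝ) + 1) / 2))
      = (1 + r ^ 2) ^ (-((1:ℝ)/2 - 1)) * (1 + r ^ 2) ^ (-((d:ℝ)/2 - 1)) / (1 + r ^ 2) ^ 2 := by
    rw [← Real.rpow_add hP0, ← Real.rpow_natCast (1 + r^2) 2, ← Real.rpow_sub hP0]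
    norm_num
    ring_nf
  have hrexp : r ^ ((d:ℝ) - 1) = r * r ^ ((d:ℝ) - 2) := by
    rw [show ((d:ℝ) - 1) = 1 + ((d:ℝ) - 2) by ring, Real.rpow_add hr0, Real.rpow_one]
  rw [hPexp, hrexp]
  ring

/-- For the standard isotropic (circular) Cauchy density on `ℝ^d`,
`f(x) = Γ((d+1)/2) π^{-(d+1)/2} (1 + ‖x‖²)^{-(d+1)/2}`, one has
`E[ln(1 + ‖Z‖²)] = ln 4 + ψ((d+1)/2) + γ_e`, where `ψ = Γ'/Γ` is the digamma
function and `γ_e` is the Euler–Mascheroni constant. -/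
theorem circular_cauchy_log_moment (d : ℕ) (hd : 1 ≤ d) :
    (∫ x : EuclideanSpace ℝ (Fin d),
        Real.Gamma (((d : ℝ) + 1) / 2) * π ^ (-(((d : ℝ) + 1) / 2)) *
          (1 + ‖x‖ ^ 2) ^ (-(((d : ℝ) + 1) / 2)) * Real.log (1 + ‖x‖ ^ 2))
      = Real.log 4 + deriv Real.Gamma (((d : ℝ) + 1) / 2) / Real.Gamma (((d : ℝ) + 1) / 2)
        + Real.eulerMascheroniConstant := by
  have hd0 : (0:ℝ) < d := by exact_mod_cast hd
  set a : ℝ := ((d:ℝ) + 1) / 2 with ha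
  set v : ℝ := (d:ℝ) / 2 with hv
  have hvpos : 0 < v := by positivity
  have hapos : 0 < a := by positivity
  have hav : (1:ℝ)/2 + v = a := by rw [ha, hv]; ring
  -- the 1D integral
  set J : ℝ := ∫ r in Ioi (0:ℝ),
      r ^ (d - 1) * (1 + r ^ 2) ^ (-a) * Real.log (1 + r ^ 2) with hJ
  -- value of J
  have hbeta := betaReal_log_eq hvpos (by norm_num : (0:ℝ) < 1/2)
  rw [hav] at hbeta
  have hsub := cauchy_subst d hd
  have hJval : J = -(1/2) * ((deriv Real.Gamma (1/2) * Real.Gamma a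
      - Real.Gamma (1/2) * deriv Real.Gamma a) * Real.Gamma v / Real.Gamma a ^ 2) := by
    rw [← hbeta, hsub]
    rw [hJ]
    ring
  -- numeric values at 1/2
  have hG12 : Real.Gamma (1/2) = Real.sqrt π := Real.Gamma_one_half_eq
  have hdG12 : deriv Real.Gamma (1/2) = -Real.sqrt π * (Real.eulerMascheroniConstant
      + 2 * Real.log 2) := Real.hasDerivAt_Gamma_one_half.deriv
  -- radial reduction
  haveI : NeZero d := ⟨by omega⟩
  have hradial := MeasureTheory.integral_fun_norm_addHaar
    (volume : Measure (EuclideanSpace ℝ (Fin d)))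
    (fun t : ℝ => Real.Gamma a * π ^ (-a) * (1 + t ^ 2) ^ (-a) * Real.log (1 + t ^ 2))
  rw [finrank_euclideanSpace_fin] at hradial
  rw [show (∫ x : EuclideanSpace ℝ (Fin d),
        Real.Gamma a * π ^ (-a) * (1 + ‖x‖ ^ 2) ^ (-a) * Real.log (1 + ‖x‖ ^ 2))
      = ∫ x : EuclideanSpace ℝ (Fin d), (fun t : ℝ =>
        Real.Gamma a * π ^ (-a) * (1 + t ^ 2) ^ (-a) * Real.log (1 + t ^ 2)) ‖x‖ from rfl,
    hradial]
  -- volume of the unit ball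
  have hball : (volume (Metric.ball (0 : EuclideanSpace ℝ (Fin d)) 1)).toReal
      = Real.sqrt π ^ d / Real.Gamma (v + 1) := by
    rw [EuclideanSpace.volume_ball (Fin d) 0 1]
    simp only [Fintype.card_fin, ENNReal.ofReal_one, one_pow, one_mul]
    rw [ENNReal.toReal_ofReal (by positivity)]
  -- pull the constant out of the radial integral
  have hpull : (∫ y in Ioi (0:ℝ), y ^ (d - 1) • (fun t : ℝ =>
        Real.Gamma a * π ^ (-a) * (1 + t ^ 2) ^ (-a) * Real.log (1 + t ^ 2)) y)
      = Real.Gamma a * π ^ (-a) * J := by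
    rw [hJ, ← MeasureTheory.integral_const_mul]
    congr 1
    funext y
    simp only [smul_eq_mul]
    ring
  rw [hpull, measureReal_def, hball, hJval, hG12, hdG12]
  -- now pure algebra
  have hΓa : Real.Gamma a ≠ 0 := (Real.Gamma_pos_of_pos hapos).ne'
  have hΓv1 : Real.Gamma (v + 1) = v * Real.Gamma v := by
    exact Real.Gamma_add_one hvpos.ne'
  have hΓv : Real.Gamma v ≠ 0 := (Real.Gamma_pos_of_pos hvpos).ne'
  have hπpow : Real.sqrt π ^ d * Real.sqrt π * π ^ (-a) = 1 := by
    rw [Real.sqrt_eq_rpow, ← Real.rpow_natCast (π ^ ((1:ℝ)/2)) d, ← Real.rpow_mul pi_pos.le,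
      ← Real.rpow_add pi_pos, ← Real.rpow_add pi_pos, ha]
    rw [show (1:ℝ)/2 * (d:ℕ) + 1/2 + -(((d:ℝ) + 1)/2) = 0 by push_cast; ring]
    exact Real.rpow_zero π
  rw [nsmul_eq_mul, smul_eq_mul, hΓv1]
  have hlog4 : Real.log 4 = 2 * Real.log 2 := by
    rw [show (4:ℝ) = 2 ^ 2 by norm_num, Real.log_pow]; push_cast; ring
  rw [hlog4]
  have hd2v : (d:ℝ) = 2 * v := by rw [hv]; ring
  field_simp
  linear_combination ((Real.eulerMascheroniConstant + 2 * Real.log 2) * Real.Gamma a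
      + deriv Real.Gamma a) * (d:ℝ) * hπpow
    + ((Real.eulerMascheroniConstant + 2 * Real.log 2) * Real.Gamma a
      + deriv Real.Gamma a) * hd2v
end

section
/- Let g : ℝ → ℝ be continuous, even, and strictly increasing on [0, ∞); let a < b be reals; and let f : ℝ → ℝ be a nonnegative integrable function that is strictly positive on the open interval (a, b). For r ∈ [a, b] define J(r) = ∫_a^r g(x − a) f(x) dx + ∫_r^b g(x − b) f(x) dx. Then J attains its minimum over [a, b] uniquely at the midpoint r = (a + b)/2; i.e., J(r) > J((a+b)/2) for every r ∈ [a, b] with r ≠ (a+b)/2. -/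
open MeasureTheory intervalIntegral

private lemma ii_mul {f : ℝ → ℝ} (hfi : Integrable f volume) {c : ℝ → ℝ}
    (hc : Continuous c) (u v : ℝ) :
    IntervalIntegrable (fun x => c x * f x) volume u v := by
  rw [intervalIntegrable_iff]
  exact IntegrableOn.continuousOn_mul_of_subset hc.continuousOn
    (hfi.integrableOn) isCompact_uIcc measurableSet_uIoc Set.uIoc_subset_uIcc

/-- Midpoint rule optimality: let `g` be continuous, even, and strictly increasing on
`[0, ∞)`, and let `f ≥ 0` be integrable and strictly positive on `(a, b)`.
Then `J(r) = ∫_a^r g(x - a) f(x) dx + ∫_r^b g(x - b) f(x) dx` attains its minimum on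
`[a, b]` uniquely at the midpoint `r = (a + b)/2`. -/
theorem midpoint_rule_optimal (g : ℝ → ℝ) (hgc : Continuous g)
    (hge : ∀ x : ℝ, g (-x) = g x) (hgm : StrictMonoOn g (Set.Ici 0))
    (a b : ℝ) (hab : a < b) (f : ℝ → ℝ) (hf0 : ∀ x, 0 ≤ f x)
    (hfi : Integrable f volume) (hfpos : ∀ x ∈ Set.Ioo a b, 0 < f x) :
    ∀ r ∈ Set.Icc a b, r ≠ (a + b) / 2 →
      (∫ x in a..((a + b) / 2), g (x - a) * f x) +
          (∫ x in ((a + b) / 2)..b, g (x - b) * f x)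
        < (∫ x in a..r, g (x - a) * f x) + (∫ x in r..b, g (x - b) * f x) := by
  intro r hr hrm
  set m : ℝ := (a + b) / 2 with hm
  have hca : Continuous fun x : ℝ => g (x - a) := hgc.comp (by continuity)
  have hcb : Continuous fun x : ℝ => g (x - b) := hgc.comp (by continuity)
  have hIa : ∀ u v : ℝ, IntervalIntegrable (fun x => g (x - a) * f x) volume u v :=
    fun u v => ii_mul hfi hca u v
  have hIb : ∀ u v : ℝ, IntervalIntegrable (fun x => g (x - b) * f x) volume u v :=
    fun u v => ii_mul hfi hcb u v
  have hId : ∀ u v : ℝ, IntervalIntegrable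
      (fun x => (g (x - a) - g (x - b)) * f x) volume u v := by
    intro u v
    exact ii_mul hfi (hca.sub hcb) u v
  -- split integrals
  have hsplit : (∫ x in a..r, g (x - a) * f x) + (∫ x in r..b, g (x - b) * f x)
      = ((∫ x in a..m, g (x - a) * f x) + (∫ x in m..b, g (x - b) * f x))
        + ∫ x in m..r, (g (x - a) - g (x - b)) * f x := by
    have h1 : (∫ x in a..r, g (x - a) * f x)
        = (∫ x in a..m, g (x - a) * f x) + ∫ x in m..r, g (x - a) * f x :=
      (integral_add_adjacent_intervals (hIa a m) (hIa m r)).symm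
    have h2 : (∫ x in r..b, g (x - b) * f x)
        = (∫ x in m..b, g (x - b) * f x) - ∫ x in m..r, g (x - b) * f x := by
      have := integral_add_adjacent_intervals (hIb m r) (hIb r b)
      linarith [this]
    have h3 : (∫ x in m..r, (g (x - a) - g (x - b)) * f x)
        = (∫ x in m..r, g (x - a) * f x) - ∫ x in m..r, g (x - b) * f x := by
      rw [← integral_sub (hIa m r) (hIb m r)]
      congr 1; ext x; ring
    linarith [h1, h2, h3]
  rw [hsplit]
  have key : 0 < ∫ x in m..r, (g (x - a) - g (x - b)) * f x := by
    rcases lt_or_gt_of_ne hrm with hlt | hgt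
    · -- r < m : flip to r..m with negated integrand
      have hId2 : IntervalIntegrable (fun x => (g (x - b) - g (x - a)) * f x) volume r m :=
        ii_mul hfi (hcb.sub hca) r m
      have hpos : 0 < ∫ x in r..m, (g (x - b) - g (x - a)) * f x := by
        apply intervalIntegral_pos_of_pos_on hId2 ?_ hlt
        intro x hx
        have hxa : a < x := lt_of_le_of_lt hr.1 hx.1
        have hxm : x < (a + b) / 2 := hx.2
        have hxb : x < b := by linarith
        have hfx : 0 < f x := hfpos x ⟨hxa, hxb⟩
        have hgx : g (x - a) < g (x - b) := by
          have hxb' : g (x - b) = g (b - x) := by rw [← hge (b - x)]; ring_nf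
          rw [hxb']
          apply hgm (by simp [le_of_lt, sub_pos.mpr hxa] : x - a ∈ Set.Ici 0)
            (by simp [le_of_lt, sub_pos.mpr hxb] : b - x ∈ Set.Ici 0)
          linarith
        exact mul_pos (sub_pos.mpr hgx) hfx
      have hflip : (∫ x in m..r, (g (x - a) - g (x - b)) * f x)
          = ∫ x in r..m, (g (x - b) - g (x - a)) * f x := by
        rw [integral_symm, ← intervalIntegral.integral_neg]
        congr 1; ext x; ring
      rw [hflip]; exact hpos
    · apply intervalIntegral_pos_of_pos_on (hId m r) ?_ hgt
      intro x hx
      have hxm : m < x := hx.1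
      have hxa : a < x := by
        have : (a + b) / 2 < x := hxm
        linarith
      have hxb : x < b := lt_of_lt_of_le hx.2 hr.2
      have hfx : 0 < f x := hfpos x ⟨hxa, hxb⟩
      have hgx : g (x - b) < g (x - a) := by
        have hxb' : g (x - b) = g (b - x) := by rw [← hge (b - x)]; ring_nf
        rw [hxb']
        apply hgm (by simp [le_of_lt, sub_pos.mpr hxb] : b - x ∈ Set.Ici 0)
          (by simp [le_of_lt, sub_pos.mpr hxa] : x - a ∈ Set.Ici 0)
        have : (a + b) / 2 < x := hxm
        linarith
      exact mul_pos (sub_pos.mpr hgx) hfx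
  linarith
end

section
/- Let X be a real random variable possessing a probability density. For Δ > 0 let X̂_Δ = Δ·k when X ∈ (kΔ − Δ/2, kΔ + Δ/2] (k ∈ ℤ), i.e., X̂_Δ is the nearest integer multiple of Δ to X, and let q_Δ = X − X̂_Δ be the quantization error. Then E[q_Δ²]/Δ² → 1/12 as Δ → 0⁺. -/
open MeasureTheory Filter


noncomputable def qg (y : ℝ) : ℝ := (y - (⌈y - 1/2⌉ : ℤ)) ^ 2
noncomputable def qh (y : ℝ) : ℝ := qg y - 1/12

lemma qg_nonneg (y : ℝ) : 0 ≤ qg y := sq_nonneg _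

lemma qg_le (y : ℝ) : qg y ≤ 1/4 := by
  have h1 : y - 1/2 ≤ (⌈y - 1/2⌉ : ℤ) := Int.le_ceil _
  have h2 : ((⌈y - 1/2⌉ : ℤ) : ℝ) < (y - 1/2) + 1 := Int.ceil_lt_add_one _
  unfold qg; nlinarith

lemma qh_abs (y : ℝ) : |qh y| ≤ 1/4 := by
  have h1 := qg_nonneg y; have h2 := qg_le y
  rw [abs_le]; unfold qh; constructor <;> linarith

lemma qg_meas : Measurable qg := by
  unfold qg
  have h1 : Measurable fun y : ℝ => ((⌈y - 1/2⌉ : ℤ) : ℝ) :=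
    measurable_from_top.comp (measurable_id.sub measurable_const).ceil
  exact (measurable_id.sub h1).pow measurable_const

lemma qh_meas : Measurable qh := qg_meas.sub measurable_const

lemma qh_periodic : Function.Periodic qh 1 := by
  intro y
  unfold qh qg
  have h : (⌈y + 1 - 1/2⌉ : ℤ) = ⌈y - 1/2⌉ + 1 := by
    rw [show y + 1 - 1/2 = (y - 1/2) + 1 by ring, Int.ceil_add_one]
  rw [h]; push_cast; ring_nf

lemma ii_of_bdd {F : ℝ → ℝ} (hF : Measurable F) {C : ℝ} (hC : ∀ x, |F x| ≤ C)
    (a b : ℝ) : IntervalIntegrable F volume a b := by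
  rw [intervalIntegrable_iff]
  refine Integrable.mono' (g := fun _ => C) (integrableOn_const measure_Ioc_lt_top.ne)
    hF.aestronglyMeasurable.restrict ?_
  exact Filter.Eventually.of_forall fun x => by simpa using hC x

lemma qh_ii (Δ a b : ℝ) : IntervalIntegrable (fun x => qh (x / Δ)) volume a b :=
  ii_of_bdd (qh_meas.comp (measurable_id.div_const Δ)) (fun x => qh_abs _) a b

lemma qg_ii (a b : ℝ) : IntervalIntegrable qg volume a b :=
  ii_of_bdd qg_meas (fun x => by rw [abs_of_nonneg (qg_nonneg x)]; exact qg_le x) a b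

lemma integral_qg : ∫ y in (0:ℝ)..1, qg y = 1/12 := by
  have h1 : ∫ y in (0:ℝ)..(1/2), qg y = ∫ y in (0:ℝ)..(1/2), y^2 := by
    apply intervalIntegral.integral_congr
    intro y hy
    rw [Set.uIcc_of_le (by norm_num)] at hy
    have hc : (⌈y - 1/2⌉ : ℤ) = 0 := by
      rw [Int.ceil_eq_zero_iff]
      constructor
      · norm_num; linarith [hy.1]
      · norm_num; linarith [hy.2]
    unfold qg; rw [hc]; push_cast; ring
  have h2 : ∫ y in (1/2:ℝ)..1, qg y = ∫ y in (1/2:ℝ)..1, (y-1)^2 := by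
    apply intervalIntegral.integral_congr
    intro y hy
    rw [Set.uIcc_of_le (by norm_num)] at hy
    rcases eq_or_lt_of_le hy.1 with h | h
    · unfold qg
      rw [← h]
      norm_num
    · have hc : (⌈y - 1/2⌉ : ℤ) = 1 := by
        rw [Int.ceil_eq_iff]
        constructor
        · push_cast; linarith
        · push_cast; linarith [hy.2]
      unfold qg; rw [hc]; push_cast; ring
  have hadd := intervalIntegral.integral_add_adjacent_intervals (qg_ii 0 (1/2)) (qg_ii (1/2) 1)
  rw [h1, h2] at hadd
  rw [← hadd, integral_pow]
  have h3 : ∫ y in (1/2:ℝ)..1, (y-1)^2 = ∫ y in (1/2-1:ℝ)..(1-1), y^2 :=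
    intervalIntegral.integral_comp_sub_right (fun y => y^2) 1
  rw [h3, integral_pow]
  norm_num

lemma integral_qh : ∫ y in (0:ℝ)..1, qh y = 0 := by
  unfold qh
  rw [intervalIntegral.integral_sub (qg_ii 0 1) (intervalIntegrable_const), integral_qg]
  simp

lemma qh_zero {Δ : ℝ} (hΔ : 0 < Δ) (c : ℝ) : ∫ x in c..(c+Δ), qh (x / Δ) = 0 := by
  rw [intervalIntegral.integral_comp_div (f := qh) hΔ.ne']
  rw [show (c+Δ)/Δ = c/Δ + 1 by field_simp]
  rw [qh_periodic.intervalIntegral_add_eq (c/Δ) 0]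
  rw [zero_add, integral_qh, smul_zero]
lemma lemB {φ : ℝ → ℝ} (hφc : Continuous φ) (hφs : HasCompactSupport φ) :
    Tendsto (fun Δ => ∫ x, φ x * qh (x / Δ)) (nhdsWithin 0 (Set.Ioi 0)) (nhds 0) := by
  rw [Metric.tendsto_nhds]
  intro ε hε
  obtain ⟨A₀, hA₀⟩ := hφs.isBounded.subset_closedBall 0
  set A : ℝ := max A₀ 1 with hAdef
  have hA1 : (1:ℝ) ≤ A := le_max_right _ _
  have hA : tsupport φ ⊆ Set.Icc (-A) A := by
    refine hA₀.trans ?_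
    rw [Real.closedBall_eq_Icc]
    apply Set.Icc_subset_Icc <;> simp [hAdef] <;> linarith [le_max_left A₀ 1]
  set ε' : ℝ := ε / (A + 2) with hε'def
  have hε' : 0 < ε' := div_pos hε (by linarith)
  have hucont : UniformContinuous φ :=
    hφc.uniformContinuous_of_tendsto_cocompact hφs.is_zero_at_infty
  obtain ⟨δ, hδ, hδφ⟩ := Metric.uniformContinuous_iff.1 hucont ε' hε'
  have hmem : Set.Ioo (0:ℝ) (min δ 1) ∈ nhdsWithin 0 (Set.Ioi 0) :=
    Ioo_mem_nhdsGT_of_mem (by constructor <;> simp [hδ]; )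
  filter_upwards [hmem] with Δ hΔm
  obtain ⟨hΔ0, hΔlt⟩ := hΔm
  have hΔδ : Δ < δ := lt_of_lt_of_le hΔlt (min_le_left _ _)
  have hΔ1 : Δ ≤ 1 := le_of_lt (lt_of_lt_of_le hΔlt (min_le_right _ _))
  set N : ℕ := ⌈A / Δ⌉₊ + 1 with hNdef
  set b : ℝ := N * Δ with hbdef
  have hbA : A < b := by
    have h1 : A / Δ ≤ (⌈A / Δ⌉₊ : ℝ) := Nat.le_ceil _
    have h2 : A = (A / Δ) * Δ := by field_simp
    rw [hbdef, hNdef]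
    push_cast
    nlinarith
  have hb2 : b ≤ A + 2 := by
    have h1 : (⌈A / Δ⌉₊ : ℝ) < A / Δ + 1 := Nat.ceil_lt_add_one (by positivity)
    have h2 : (A / Δ) * Δ = A := by field_simp
    rw [hbdef, hNdef]
    push_cast
    nlinarith
  set F : ℝ → ℝ := fun x => φ x * qh (x / Δ) with hFdef
  set a : ℕ → ℝ := fun k => -b + k * Δ with hadef
  have ha1 : ∀ k : ℕ, a (k+1) = a k + Δ := by intro k; simp [hadef]; push_cast; ring
  have hFii : ∀ (c d e : ℝ), IntervalIntegrable (fun x => (φ x - e) * qh (x / Δ)) volume c d :=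
    fun c d e => (qh_ii Δ c d).continuousOn_mul ((hφc.sub continuous_const).continuousOn)
  have hFii' : ∀ (c d : ℝ), IntervalIntegrable F volume c d := by
    intro c d
    simpa using (qh_ii Δ c d).continuousOn_mul hφc.continuousOn
  -- whole-line integral equals interval integral
  have hsupp : Function.support F ⊆ Set.Ioc (-b) b := by
    intro x hx
    have : x ∈ tsupport φ := by
      apply subset_tsupport
      intro h0
      apply hx
      simp [hFdef, h0]
    have := hA this
    exact ⟨by linarith [this.1], by linarith [this.2]⟩
  have heq : ∫ x, F x = ∫ x in (-b)..b, F x :=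
    (intervalIntegral.integral_eq_integral_of_support_subset hsupp).symm
  -- partition
  have hpart : ∫ x in (a 0)..(a (2*N)), F x
      = ∑ k ∈ Finset.range (2*N), ∫ x in (a k)..(a (k+1)), F x :=
    (intervalIntegral.sum_integral_adjacent_intervals (fun k _ => hFii' _ _)).symm
  have ha0 : a 0 = -b := by simp [hadef]
  have ha2N : a (2*N) = b := by simp [hadef, hbdef]; push_cast; ring
  -- per-piece bound
  have hpiece : ∀ k : ℕ, ‖∫ x in (a k)..(a (k+1)), F x‖ ≤ ε' / 4 * Δ := by
    intro k
    have hsplit : ∀ x, F x = (φ x - φ (a k)) * qh (x / Δ) + φ (a k) * qh (x / Δ) := by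
      intro x; simp [hFdef]; ring
    have : ∫ x in (a k)..(a (k+1)), F x
        = (∫ x in (a k)..(a (k+1)), (φ x - φ (a k)) * qh (x / Δ))
          + ∫ x in (a k)..(a (k+1)), φ (a k) * qh (x / Δ) := by
      rw [← intervalIntegral.integral_add (hFii _ _ _) ((qh_ii Δ _ _).const_mul _)]
      apply intervalIntegral.integral_congr
      intro x _; exact hsplit x
    rw [this]
    have hz : ∫ x in (a k)..(a (k+1)), φ (a k) * qh (x / Δ) = 0 := by
      rw [intervalIntegral.integral_const_mul, ha1 k, qh_zero hΔ0, mul_zero]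
    rw [hz, add_zero, ha1 k]
    have hbound : ∀ x ∈ Set.uIoc (a k) (a k + Δ), ‖(φ x - φ (a k)) * qh (x / Δ)‖ ≤ ε' * (1/4) := by
      intro x hx
      rw [Set.uIoc_of_le (by linarith)] at hx
      have hd : dist x (a k) < δ := by
        rw [Real.dist_eq, abs_of_pos (by linarith [hx.1])]
        linarith [hx.2]
      have h1 : |φ x - φ (a k)| ≤ ε' := le_of_lt (by simpa [Real.dist_eq] using hδφ hd)
      rw [norm_mul]
      exact mul_le_mul h1 (qh_abs _) (abs_nonneg _) (le_of_lt hε')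
    calc ‖∫ x in (a k)..(a k + Δ), (φ x - φ (a k)) * qh (x / Δ)‖
        ≤ ε' * (1/4) * |a k + Δ - a k| := intervalIntegral.norm_integral_le_of_norm_le_const hbound
      _ = ε' / 4 * Δ := by rw [show a k + Δ - a k = Δ by ring, abs_of_pos hΔ0]; ring
  -- assemble
  rw [Real.dist_eq, sub_zero]
  calc |∫ x, F x| = ‖∑ k ∈ Finset.range (2*N), ∫ x in (a k)..(a (k+1)), F x‖ := by
        rw [heq, ← ha0, ← ha2N, hpart]; rfl
    _ ≤ ∑ k ∈ Finset.range (2*N), ‖∫ x in (a k)..(a (k+1)), F x‖ := norm_sum_le _ _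
    _ ≤ ∑ _k ∈ Finset.range (2*N), (ε' / 4 * Δ) := Finset.sum_le_sum (fun k _ => hpiece k)
    _ = 2 * N * Δ * (ε' / 4) := by rw [Finset.sum_const, Finset.card_range]; push_cast; ring
    _ = 2 * b * (ε' / 4) := by rw [hbdef]; ring
    _ ≤ 2 * (A + 2) * (ε' / 4) := by nlinarith
    _ = ε / 2 := by rw [hε'def]; field_simp; ring
    _ < ε := by linarith

/-- High-rate performance of the uniform scalar quantizer under the mean squared
error: if `X` has a density and `X̂_Δ` is the nearest multiple of `Δ` (with
`X ∈ (kΔ - Δ/2, kΔ + Δ/2]` mapped to `kΔ`, i.e. `X̂_Δ = Δ⌈X/Δ - 1/2⌉`), then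
`E[(X - X̂_Δ)²]/Δ² → 1/12` as `Δ → 0⁺`. -/
theorem uniform_quantizer_mse {Ω : Type*} [MeasurableSpace Ω] (P : Measure Ω)
    [IsProbabilityMeasure P] (X : Ω → ℝ) (hX : Measurable X)
    (hpdf : HasPDF X P volume) :
    Tendsto (fun Δ : ℝ =>
        (∫ ω, (X ω - Δ * (⌈X ω / Δ - 1 / 2⌉ : ℤ)) ^ 2 ∂P) / Δ ^ 2)
      (nhdsWithin 0 (Set.Ioi 0)) (nhds (1 / 12)) := by
  set f : ℝ → ℝ := fun x => (pdf X P volume x).toReal with hfdef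
  have hfm : Measurable f := (measurable_pdf X P volume).ennreal_toReal
  have hlint : ∫⁻ x, pdf X P volume x = 1 := by
    rw [MeasureTheory.pdf.lintegral_eq_measure_univ, measure_univ]
  have hfint : Integrable f volume :=
    integrable_toReal_of_lintegral_ne_top (measurable_pdf X P volume).aemeasurable
      (by rw [hlint]; exact ENNReal.one_ne_top)
  have hfnn : ∀ x, 0 ≤ f x := fun x => ENNReal.toReal_nonneg
  have hf1 : ∫ x, f x = 1 := by
    rw [hfdef]
    rw [integral_toReal (measurable_pdf X P volume).aemeasurable MeasureTheory.pdf.ae_lt_top]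
    rw [hlint]; rfl
  -- key identity for Δ > 0
  have hkey : ∀ Δ : ℝ, 0 < Δ →
      (∫ ω, (X ω - Δ * (⌈X ω / Δ - 1 / 2⌉ : ℤ)) ^ 2 ∂P) / Δ ^ 2 - 1/12
        = ∫ x, f x * qh (x / Δ) := by
    intro Δ hΔ
    have hmg : Measurable fun x : ℝ => qg (x / Δ) := qg_meas.comp (measurable_id.div_const Δ)
    have h1 : (∫ ω, (X ω - Δ * (⌈X ω / Δ - 1 / 2⌉ : ℤ)) ^ 2 ∂P) / Δ ^ 2
        = ∫ ω, qg (X ω / Δ) ∂P := by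
      rw [← integral_div]
      apply integral_congr_ae
      filter_upwards with ω
      rw [qg]
      field_simp
    have h2 : ∫ ω, qg (X ω / Δ) ∂P = ∫ x, f x * qg (x / Δ) := by
      have h := MeasureTheory.pdf.integral_pdf_smul (X := X) (ℙ := P) (μ := volume)
        hmg.aestronglyMeasurable
      simp only [smul_eq_mul] at h
      exact h.symm
    have hint1 : Integrable (fun x => f x * qg (x / Δ)) volume := by
      apply Integrable.mono' (hfint.mul_const (1/4))
        (hfm.mul hmg).aestronglyMeasurable
      filter_upwards with x
      simp only [Pi.mul_apply]
      rw [Real.norm_eq_abs, abs_mul, abs_of_nonneg (hfnn x),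
        abs_of_nonneg (qg_nonneg _)]
      exact mul_le_mul_of_nonneg_left (qg_le _) (hfnn x)
    have h3 : (∫ x, f x * qg (x / Δ)) - 1/12
        = ∫ x, (f x * qg (x / Δ) - f x * (1/12)) := by
      rw [integral_sub hint1 (hfint.mul_const (1/12)), integral_mul_const, hf1, one_mul]
    rw [h1, h2, h3]
    apply integral_congr_ae
    filter_upwards with x
    rw [qh]
    ring
  rw [Metric.tendsto_nhds]
  intro ε hε
  obtain ⟨φ, hφs, hφd, hφc, hφint⟩ :=
    hfint.exists_hasCompactSupport_integral_sub_le (show (0:ℝ) < ε/4 by linarith)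
  have hB := Metric.tendsto_nhds.1 (lemB hφc hφs) (ε/2) (by linarith)
  filter_upwards [hB, self_mem_nhdsWithin] with Δ hBΔ hΔ0
  rw [Set.mem_Ioi] at hΔ0
  rw [Real.dist_eq]
  have hmh : Measurable fun x : ℝ => qh (x / Δ) := qh_meas.comp (measurable_id.div_const Δ)
  have hintf : Integrable (fun x => f x * qh (x / Δ)) volume := by
    apply Integrable.mono' (hfint.norm.mul_const (1/4)) (hfm.mul hmh).aestronglyMeasurable
    filter_upwards with x
    simp only [Pi.mul_apply]
    rw [Real.norm_eq_abs, abs_mul]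
    exact mul_le_mul (le_refl _) (qh_abs _) (abs_nonneg _) (abs_nonneg _) |>.trans
      (by rw [Real.norm_eq_abs])
  have hintφ : Integrable (fun x => φ x * qh (x / Δ)) volume := by
    apply Integrable.mono' (hφint.norm.mul_const (1/4)) (hφc.measurable.mul hmh).aestronglyMeasurable
    filter_upwards with x
    simp only [Pi.mul_apply]
    rw [Real.norm_eq_abs, abs_mul]
    exact mul_le_mul (le_refl _) (qh_abs _) (abs_nonneg _) (abs_nonneg _) |>.trans
      (by rw [Real.norm_eq_abs])
  have hsplit : ∫ x, f x * qh (x / Δ)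
      = (∫ x, (f x - φ x) * qh (x / Δ)) + ∫ x, φ x * qh (x / Δ) := by
    rw [← integral_add _ hintφ]
    · apply integral_congr_ae; filter_upwards with x; ring
    · apply Integrable.congr (hintf.sub hintφ)
      filter_upwards with x
      simp only [Pi.sub_apply]
      ring
  have hdiff : |∫ x, (f x - φ x) * qh (x / Δ)| ≤ ε/4 * (1/4) * 4 := by
    have hb : ‖∫ x, (f x - φ x) * qh (x / Δ)‖ ≤ ∫ x, ‖f x - φ x‖ * (1/4) := by
      apply norm_integral_le_of_norm_le ((hfint.sub hφint).norm.mul_const (1/4))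
      filter_upwards with x
      rw [Real.norm_eq_abs, abs_mul]
      exact mul_le_mul (le_refl _) (qh_abs _) (abs_nonneg _) (abs_nonneg _)
    have hc : ∫ x, ‖f x - φ x‖ * (1/4) ≤ ε/4 * (1/4) := by
      rw [integral_mul_const]
      exact mul_le_mul_of_nonneg_right hφd (by norm_num)
    calc |∫ x, (f x - φ x) * qh (x / Δ)| ≤ ε/4*(1/4) := le_trans hb hc
      _ ≤ ε/4 * (1/4) * 4 := by nlinarith
  rw [hkey Δ hΔ0, hsplit]
  rw [Real.dist_eq, sub_zero] at hBΔ
  calc |(∫ x, (f x - φ x) * qh (x / Δ)) + ∫ x, φ x * qh (x / Δ)|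
      ≤ |∫ x, (f x - φ x) * qh (x / Δ)| + |∫ x, φ x * qh (x / Δ)| := abs_add_le _ _
    _ < ε/4 * (1/4) * 4 + ε/2 := by
        apply add_lt_add_of_le_of_lt hdiff hBΔ
    _ ≤ ε := by linarith
end
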